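/- arXiv:2504.04183 — 3 statements merged into one kernel-verified Lean document; each statement's English description precedes it below -/
import Mathlib

section
/- Every nonempty exposed face of the permutohedron Perm^{m−1} (a subset F ⊆ Perm^{m−1} of the form F = {x ∈ Perm^{m−1} : φ(y) ≤ φ(x) for all y ∈ Perm^{m−1}} for some linear functional φ on ℝ^m) is equal to F(U_1 | ⋯ | U_p) for a unique ordered partition (U_1 | ⋯ | U_p) of [m]; conversely, for every ordered partition (U_1 | ⋯ | U_p) of [m], the set F(U_1 | ⋯ | U_p) is a nonempty exposed face of Perm^{m−1}. -/
/-- The vertex of the permutohedron corresponding to a permutation `σ` of `[m]`: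
the point `(σ(1), …, σ(m))` (in 0-based coordinates, `i ↦ σ(i) + 1`). -/
def permVertex (m : ℕ) (σ : Equiv.Perm (Fin m)) : Fin m → ℝ :=
  fun i => ((σ i : ℕ) : ℝ) + 1

/-- The permutohedron `Perm^{m-1} ⊂ ℝ^m`: the convex hull of the points
`(σ(1), …, σ(m))` over all permutations `σ` of `[m]`. -/
def permutohedron (m : ℕ) : Set (Fin m → ℝ) :=
  convexHull ℝ {x | ∃ σ : Equiv.Perm (Fin m), x = permVertex m σ}

/-- An ordered partition `(U_1 | ⋯ | U_p)` of `[m]`: a tuple (list) of pairwise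
disjoint nonempty subsets of `[m]` whose union is `[m]`. -/
def IsOrderedPartition (m : ℕ) (L : List (Finset (Fin m))) : Prop :=
  (∀ U ∈ L, U.Nonempty) ∧ L.Pairwise Disjoint ∧ L.foldr (· ∪ ·) ∅ = Finset.univ

/-- `|U_1| + ⋯ + |U_j|`, the sum of the cardinalities of the first `j` parts. -/
def partialCard (m : ℕ) (L : List (Finset (Fin m))) (j : ℕ) : ℕ :=
  ((L.take j).map Finset.card).sum

/-- A permutation `σ` is compatible with the ordered partition `(U_1 | ⋯ | U_p)` if
for every `j` it maps `U_j` bijectively onto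
`{|U_1| + ⋯ + |U_{j-1}| + 1, …, |U_1| + ⋯ + |U_j|}` (here in 0-based form). -/
def Compatible (m : ℕ) (L : List (Finset (Fin m))) (σ : Equiv.Perm (Fin m)) : Prop :=
  ∀ j : Fin L.length, ∀ i : Fin m,
    i ∈ L.get j ↔ partialCard m L j ≤ (σ i : ℕ) ∧ (σ i : ℕ) < partialCard m L (j + 1)

/-- The face `F(U_1 | ⋯ | U_p)` of the permutohedron: the convex hull of the vertices
corresponding to permutations compatible with the ordered partition. -/
def permFace (m : ℕ) (L : List (Finset (Fin m))) : Set (Fin m → ℝ) :=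
  convexHull ℝ {x | ∃ σ : Equiv.Perm (Fin m), Compatible m L σ ∧ x = permVertex m σ}

-- ===== stage 1: list & partialCard lemmas =====

lemma mem_foldr_union {m : ℕ} (L : List (Finset (Fin m))) (i : Fin m) :
    i ∈ L.foldr (· ∪ ·) ∅ ↔ ∃ U ∈ L, i ∈ U := by
  induction L with
  | nil => simp
  | cons U l ih => simp [ih]

lemma card_foldr_union {m : ℕ} (L : List (Finset (Fin m))) (h : L.Pairwise Disjoint) :
    (L.foldr (· ∪ ·) ∅).card = (L.map Finset.card).sum := by
  induction L with
  | nil => simp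
  | cons U l ih =>
    simp only [List.foldr_cons, List.map_cons, List.sum_cons]
    rw [Finset.card_union_of_disjoint, ih (List.Pairwise.of_cons h)]
    rw [Finset.disjoint_left]
    intro a ha hb
    rw [mem_foldr_union] at hb
    obtain ⟨V, hV, haV⟩ := hb
    exact Finset.disjoint_left.1 (List.rel_of_pairwise_cons h hV) ha haV

lemma partialCard_succ (m : ℕ) (L : List (Finset (Fin m))) (j : ℕ) :
    partialCard m L (j + 1) = partialCard m L j + (L.getD j ∅).card := by
  unfold partialCard
  rw [List.take_succ, List.map_append, List.sum_append]
  congr 1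
  by_cases hj : j < L.length
  · rw [List.getElem?_eq_getElem hj, List.getD_eq_getElem L ∅ hj]
    simp
  · rw [List.getElem?_eq_none (le_of_not_gt hj), List.getD_eq_default L ∅ (le_of_not_gt hj)]
    simp

lemma partialCard_eq_sum (m : ℕ) (L : List (Finset (Fin m))) (j : ℕ) :
    partialCard m L j = ∑ k ∈ Finset.range j, (L.getD k ∅).card := by
  induction j with
  | zero => simp [partialCard]
  | succ j ih => rw [Finset.sum_range_succ, partialCard_succ, ih]

lemma partialCard_mono (m : ℕ) (L : List (Finset (Fin m))) : Monotone (partialCard m L) := by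
  intro a b hab
  rw [partialCard_eq_sum, partialCard_eq_sum]
  exact Finset.sum_le_sum_of_subset (Finset.range_subset_range.2 hab)

lemma partialCard_total {m : ℕ} {L : List (Finset (Fin m))} (hL : IsOrderedPartition m L) :
    partialCard m L L.length = m := by
  unfold partialCard
  rw [List.take_length, ← card_foldr_union L hL.2.1, hL.2.2, Finset.card_univ, Fintype.card_fin]

lemma partialCard_stab (m : ℕ) (L : List (Finset (Fin m))) {j : ℕ} (hj : L.length ≤ j) :
    partialCard m L j = partialCard m L L.length := by
  unfold partialCard
  rw [List.take_of_length_le hj, List.take_length]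

lemma partialCard_le {m : ℕ} {L : List (Finset (Fin m))} (hL : IsOrderedPartition m L) (j : ℕ) :
    partialCard m L j ≤ m := by
  rcases le_or_gt j L.length with h | h
  · calc partialCard m L j ≤ partialCard m L L.length := partialCard_mono m L h
      _ = m := partialCard_total hL
  · rw [partialCard_stab m L h.le, partialCard_total hL]

lemma partialCard_lt {m : ℕ} {L : List (Finset (Fin m))} (hL : IsOrderedPartition m L)
    {j : ℕ} (hj : j < L.length) : partialCard m L j < partialCard m L (j + 1) := by
  rw [partialCard_succ]
  have hne : (L.getD j ∅).Nonempty := by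
    rw [List.getD_eq_getElem L ∅ hj]
    exact hL.1 _ (List.getElem_mem _)
  have := Finset.card_pos.2 hne
  omega

lemma partialCard_strict {m : ℕ} {L : List (Finset (Fin m))} (hL : IsOrderedPartition m L)
    {j k : ℕ} (hjk : j < k) (hj : j < L.length) :
    partialCard m L j < partialCard m L k := by
  calc partialCard m L j < partialCard m L (j + 1) := partialCard_lt hL hj
    _ ≤ partialCard m L k := partialCard_mono m L hjk

lemma exists_block {m : ℕ} {L : List (Finset (Fin m))} (hL : IsOrderedPartition m L) (i : Fin m) :
    ∃ j : Fin L.length, i ∈ L.get j := by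
  have : i ∈ L.foldr (· ∪ ·) ∅ := hL.2.2 ▸ Finset.mem_univ i
  rw [mem_foldr_union] at this
  obtain ⟨U, hU, hiU⟩ := this
  obtain ⟨j, rfl⟩ := List.mem_iff_get.1 hU
  exact ⟨j, hiU⟩

lemma block_unique {m : ℕ} {L : List (Finset (Fin m))} (hL : IsOrderedPartition m L)
    {i : Fin m} {j k : Fin L.length} (hj : i ∈ L.get j) (hk : i ∈ L.get k) : j = k := by
  by_contra hne
  have hpw := List.pairwise_iff_get.1 hL.2.1
  rcases lt_or_gt_of_ne hne with h | h
  · exact Finset.disjoint_left.1 (hpw j k h) hj hk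
  · exact Finset.disjoint_left.1 (hpw k j h) hk hj

lemma interval_unique {m : ℕ} {L : List (Finset (Fin m))} (hL : IsOrderedPartition m L)
    {j k : Fin L.length} {v : ℕ}
    (h1 : partialCard m L j ≤ v) (h2 : v < partialCard m L ((j : ℕ) + 1))
    (h3 : partialCard m L k ≤ v) (h4 : v < partialCard m L ((k : ℕ) + 1)) : j = k := by
  by_contra hne
  have hjk : (j : ℕ) ≠ (k : ℕ) := fun h => hne (Fin.ext h)
  rcases hjk.lt_or_gt with h | h
  · have : partialCard m L ((j : ℕ) + 1) ≤ partialCard m L (k : ℕ) := partialCard_mono m L h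
    omega
  · have : partialCard m L ((k : ℕ) + 1) ≤ partialCard m L (j : ℕ) := partialCard_mono m L h
    omega

lemma partialCard_injOn {m : ℕ} {L : List (Finset (Fin m))} (hL : IsOrderedPartition m L)
    {j k : ℕ} (hj : j ≤ L.length) (hk : k ≤ L.length)
    (h : partialCard m L j = partialCard m L k) : j = k := by
  by_contra hne
  rcases Ne.lt_or_gt hne with hlt | hlt
  · exact absurd h (partialCard_strict hL hlt (lt_of_lt_of_le hlt hk)).ne
  · exact absurd h.symm (partialCard_strict hL hlt (lt_of_lt_of_le hlt hj)).ne
-- ===== stage 2: convexity lemmas =====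
section ConvexLemmas

variable {E : Type*} [AddCommGroup E] [Module ℝ E]

lemma phi_le_of_mem_convexHull {s : Finset E} {φ : E →ₗ[ℝ] ℝ} {B : ℝ}
    (h : ∀ z ∈ s, φ z ≤ B) {x : E} (hx : x ∈ convexHull ℝ (s : Set E)) : φ x ≤ B := by
  have hconv : Convex ℝ {y : E | φ y ≤ B} := convex_halfSpace_le φ.isLinear B
  exact convexHull_min (fun z hz => h z hz) hconv hx

lemma phi_ge_of_mem_convexHull {s : Finset E} {φ : E →ₗ[ℝ] ℝ} {B : ℝ}
    (h : ∀ z ∈ s, B ≤ φ z) {x : E} (hx : x ∈ convexHull ℝ (s : Set E)) : B ≤ φ x := by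
  have hconv : Convex ℝ {y : E | B ≤ φ y} := convex_halfSpace_ge φ.isLinear B
  exact convexHull_min (fun z hz => h z hz) hconv hx

lemma mem_face_aux [DecidableEq E] {s : Finset E} {φ : E →ₗ[ℝ] ℝ} {x : E}
    (hx : x ∈ convexHull ℝ (s : Set E)) (hmax : ∀ z ∈ s, φ z ≤ φ x) :
    x ∈ convexHull ℝ ((s.filter fun z => φ z = φ x : Finset E) : Set E) := by
  classical
  rw [Finset.convexHull_eq] at hx ⊢
  obtain ⟨w, hw0, hw1, hwx⟩ := hx
  rw [Finset.centerMass_eq_of_sum_1 _ _ hw1] at hwx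
  have hφ : ∑ z ∈ s, w z * φ z = φ x := by
    rw [← hwx, map_sum]
    simp [smul_eq_mul]
  have hzero : ∑ z ∈ s, w z * (φ x - φ z) = 0 := by
    have : ∑ z ∈ s, w z * (φ x - φ z) = (∑ z ∈ s, w z) * φ x - ∑ z ∈ s, w z * φ z := by
      rw [Finset.sum_mul, ← Finset.sum_sub_distrib]
      congr 1; ext z; ring
    rw [this, hw1, hφ]; ring
  have key : ∀ z ∈ s, w z ≠ 0 → φ z = φ x := by
    intro z hz hwz
    have hall := (Finset.sum_eq_zero_iff_of_nonneg (fun z hz => by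
      have := hmax z hz
      have := hw0 z hz
      nlinarith)).1 hzero z hz
    rcases mul_eq_zero.1 hall with h | h
    · exact absurd h hwz
    · linarith [hmax z hz]
  refine ⟨w, fun y hy => hw0 y (Finset.mem_filter.1 hy).1, ?_, ?_⟩
  · rw [Finset.sum_filter_of_ne (fun z hz hne => key z hz hne), hw1]
  · rw [Finset.centerMass_eq_of_sum_1 _ _ (by rw [Finset.sum_filter_of_ne (fun z hz hne => key z hz hne), hw1])]
    rw [Finset.sum_filter_of_ne, hwx]
    intro z hz hne
    apply key z hz
    intro h0
    exact hne (by rw [h0, zero_smul])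

lemma eq_of_unique_max [DecidableEq E] {s : Finset E} {φ : E →ₗ[ℝ] ℝ} {x : E}
    (hx : x ∈ convexHull ℝ (s : Set E)) (hmax : ∀ z ∈ s, φ z ≤ φ x)
    (huniq : ∀ z ∈ s, φ z = φ x → z = x) : x ∈ s := by
  classical
  have h1 := mem_face_aux hx hmax
  have hne : ((s.filter fun z => φ z = φ x : Finset E) : Set E).Nonempty :=
    convexHull_nonempty_iff.1 ⟨x, h1⟩
  obtain ⟨z, hz⟩ := hne
  rw [Finset.mem_coe, Finset.mem_filter] at hz
  have : z = x := huniq z hz.1 hz.2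
  exact this ▸ hz.1

lemma exposed_face_convexHull [DecidableEq E] (s : Finset E) (φ : E →ₗ[ℝ] ℝ) :
    {x ∈ convexHull ℝ (s : Set E) | ∀ y ∈ convexHull ℝ (s : Set E), φ y ≤ φ x}
      = convexHull ℝ ((s.filter fun z => ∀ y ∈ s, φ y ≤ φ z : Finset E) : Set E) := by
  classical
  ext x
  constructor
  · rintro ⟨hx, hxmax⟩
    have hmax : ∀ z ∈ s, φ z ≤ φ x := fun z hz => hxmax z (subset_convexHull ℝ _ hz)
    refine convexHull_mono ?_ (mem_face_aux hx hmax)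
    intro z hz
    obtain ⟨hzs, hze⟩ := Finset.mem_filter.1 hz
    exact Finset.mem_filter.2 ⟨hzs, fun y hy => hze ▸ hmax y hy⟩
  · intro hx
    rcases Finset.eq_empty_or_nonempty (s.filter fun z => ∀ y ∈ s, φ y ≤ φ z) with he | hne
    · rw [he] at hx; simp at hx
    · obtain ⟨z₀, hz₀⟩ := hne
      obtain ⟨hz₀s, hz₀max⟩ := Finset.mem_filter.1 hz₀
      have hxs : x ∈ convexHull ℝ (s : Set E) :=
        convexHull_mono (Finset.coe_subset.2 (Finset.filter_subset _ _)) hx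
      have hxval : φ x = φ z₀ := by
        apply le_antisymm
        · refine phi_le_of_mem_convexHull (fun z hz => ?_) hx
          exact hz₀max z (Finset.mem_filter.1 hz).1
        · refine phi_ge_of_mem_convexHull (fun z hz => ?_) hx
          exact (Finset.mem_filter.1 hz).2 z₀ hz₀s
      exact ⟨hxs, fun y hy => hxval ▸ phi_le_of_mem_convexHull (fun z hz => hz₀max z hz) hy⟩

end ConvexLemmas
-- ===== stage 3: rearrangement =====

def gval (m : ℕ) : Fin m → ℝ := fun i => ((i : ℕ) : ℝ)

noncomputable def phiC (m : ℕ) (c : Fin m → ℝ) : (Fin m → ℝ) →ₗ[ℝ] ℝ := ∑ i, c i • LinearMap.proj i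

lemma phiC_apply (m : ℕ) (c : Fin m → ℝ) (y : Fin m → ℝ) :
    phiC m c y = ∑ i, c i * y i := by
  simp [phiC, LinearMap.proj_apply, smul_eq_mul]

lemma phiC_vertex (m : ℕ) (c : Fin m → ℝ) (σ : Equiv.Perm (Fin m)) :
    phiC m c (permVertex m σ) = (∑ i, c i * gval m (σ i)) + ∑ i, c i := by
  rw [phiC_apply, ← Finset.sum_add_distrib]
  congr 1; ext i
  simp only [permVertex, gval]; ring

lemma gval_lt_iff {m : ℕ} {a b : Fin m} : gval m a < gval m b ↔ a < b := by
  unfold gval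
  rw [Nat.cast_lt]
  exact Iff.rfl

lemma exists_monovary_perm (m : ℕ) (c : Fin m → ℝ) :
    ∃ σ : Equiv.Perm (Fin m), Monovary c fun i => gval m (σ i) := by
  refine ⟨(Tuple.sort c)⁻¹, fun i j hij => ?_⟩
  rw [gval_lt_iff] at hij
  have h1 : c i = (c ∘ Tuple.sort c) ((Tuple.sort c)⁻¹ i) := by simp
  have h2 : c j = (c ∘ Tuple.sort c) ((Tuple.sort c)⁻¹ j) := by simp
  rw [h1, h2]
  exact Tuple.monotone_sort c hij.le

lemma sum_le_of_monovary {m : ℕ} (c : Fin m → ℝ) (σ₀ : Equiv.Perm (Fin m))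
    (hmono : Monovary c fun i => gval m (σ₀ i)) (τ : Equiv.Perm (Fin m)) :
    ∑ i, c i * gval m (τ i) ≤ ∑ i, c i * gval m (σ₀ i) := by
  have h := hmono.sum_smul_comp_perm_le_sum_smul (σ := σ₀⁻¹ * τ)
  simpa [smul_eq_mul, Equiv.Perm.mul_apply] using h

lemma sum_eq_iff_monovary {m : ℕ} (c : Fin m → ℝ) (σ₀ : Equiv.Perm (Fin m))
    (hmono : Monovary c fun i => gval m (σ₀ i)) (τ : Equiv.Perm (Fin m)) :
    ∑ i, c i * gval m (τ i) = ∑ i, c i * gval m (σ₀ i) ↔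
      Monovary c fun i => gval m (τ i) := by
  have h := hmono.sum_smul_comp_perm_eq_sum_smul_iff (σ := σ₀⁻¹ * τ)
  have hfun : ((fun i => gval m (σ₀ i)) ∘ ⇑(σ₀⁻¹ * τ)) = fun i => gval m (τ i) := by
    funext i
    simp [Equiv.Perm.mul_apply]
  rw [hfun] at h
  constructor
  · intro he
    apply h.1
    simpa [smul_eq_mul, Equiv.Perm.mul_apply] using he
  · intro hm
    have := h.2 hm
    simpa [smul_eq_mul, Equiv.Perm.mul_apply] using this

lemma maximizer_iff_monovary (m : ℕ) (c : Fin m → ℝ) (σ : Equiv.Perm (Fin m)) :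
    (∀ τ : Equiv.Perm (Fin m), ∑ i, c i * gval m (τ i) ≤ ∑ i, c i * gval m (σ i)) ↔
      Monovary c fun i => gval m (σ i) := by
  obtain ⟨σ₀, hσ₀⟩ := exists_monovary_perm m c
  constructor
  · intro h
    have h1 : ∑ i, c i * gval m (σ i) = ∑ i, c i * gval m (σ₀ i) :=
      le_antisymm (sum_le_of_monovary c σ₀ hσ₀ σ) (h σ₀)
    exact (sum_eq_iff_monovary c σ₀ hσ₀ σ).1 h1
  · intro h τ
    calc ∑ i, c i * gval m (τ i) ≤ ∑ i, c i * gval m (σ₀ i) := sum_le_of_monovary c σ₀ hσ₀ τ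
      _ = ∑ i, c i * gval m (σ i) := ((sum_eq_iff_monovary c σ₀ hσ₀ σ).2 h).symm

-- bounds
noncomputable def pltN (m : ℕ) (c : Fin m → ℝ) (i : Fin m) : ℕ :=
  (Finset.univ.filter fun i' => c i' < c i).card

noncomputable def pleN (m : ℕ) (c : Fin m → ℝ) (i : Fin m) : ℕ :=
  (Finset.univ.filter fun i' => c i' ≤ c i).card

lemma card_filter_perm_lt (m : ℕ) (σ : Equiv.Perm (Fin m)) (i : Fin m) :
    (Finset.univ.filter fun i' => σ i' < σ i).card = (σ i : ℕ) := by
  have himg : (Finset.univ.filter fun i' => σ i' < σ i).image σ = Finset.Iio (σ i) := by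
    ext a
    simp only [Finset.mem_image, Finset.mem_filter, Finset.mem_univ, true_and, Finset.mem_Iio]
    constructor
    · rintro ⟨i', hi', rfl⟩; exact hi'
    · intro ha; exact ⟨σ⁻¹ a, by simpa using ha, by simp⟩
  rw [← Fin.card_Iio (σ i), ← himg, Finset.card_image_of_injective _ σ.injective]

lemma monovary_iff_bounds (m : ℕ) (c : Fin m → ℝ) (σ : Equiv.Perm (Fin m)) :
    (Monovary c fun i => gval m (σ i)) ↔
      ∀ i, pltN m c i ≤ (σ i : ℕ) ∧ (σ i : ℕ) < pleN m c i := by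
  constructor
  · intro h i
    have hsub1 : (Finset.univ.filter fun i' => c i' < c i) ⊆
        (Finset.univ.filter fun i' => σ i' < σ i) := by
      intro i' hi'
      simp only [Finset.mem_filter, Finset.mem_univ, true_and] at *
      rcases lt_trichotomy (σ i') (σ i) with hlt | heq | hgt
      · exact hlt
      · exact absurd (σ.injective heq ▸ hi') (lt_irrefl _)
      · exact absurd (h (gval_lt_iff.2 hgt)) (not_le.2 hi')
    have hsub2 : (Finset.univ.filter fun i' => σ i' < σ i) ⊆
        ((Finset.univ.filter fun i' => c i' ≤ c i).erase i) := by
      intro i' hi'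
      simp only [Finset.mem_filter, Finset.mem_univ, true_and] at hi'
      rw [Finset.mem_erase]
      refine ⟨fun he => by simp [he] at hi', ?_⟩
      simp only [Finset.mem_filter, Finset.mem_univ, true_and]
      exact h (gval_lt_iff.2 hi')
    constructor
    · calc pltN m c i ≤ (Finset.univ.filter fun i' => σ i' < σ i).card :=
            Finset.card_le_card hsub1
        _ = (σ i : ℕ) := card_filter_perm_lt m σ i
    · have h2 := Finset.card_le_card hsub2
      rw [card_filter_perm_lt m σ i] at h2
      have hi : i ∈ Finset.univ.filter fun i' => c i' ≤ c i := by simp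
      rw [Finset.card_erase_of_mem hi] at h2
      have hpos : 0 < pleN m c i := Finset.card_pos.2 ⟨i, hi⟩
      show (σ i : ℕ) < (Finset.univ.filter fun i' => c i' ≤ c i).card
      have : pleN m c i = (Finset.univ.filter fun i' => c i' ≤ c i).card := rfl
      omega
  · intro h i j hij
    rw [gval_lt_iff, Fin.lt_def] at hij
    by_contra hc
    push_neg at hc
    have hsub : (Finset.univ.filter fun i' => c i' ≤ c j) ⊆
        (Finset.univ.filter fun i' => c i' < c i) := by
      intro i' hi'
      simp only [Finset.mem_filter, Finset.mem_univ, true_and] at *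
      exact lt_of_le_of_lt hi' hc
    have hle : pleN m c j ≤ pltN m c i := Finset.card_le_card hsub
    have h1 := h i
    have h2 := h j
    omega
-- ===== stage 4: Compatible ↔ bounds =====

def BlockResp (m : ℕ) (L : List (Finset (Fin m))) (c : Fin m → ℝ) : Prop :=
  ∀ (j k : Fin L.length) (i i' : Fin m), i ∈ L.get j → i' ∈ L.get k →
    (c i < c i' ↔ (j : ℕ) < (k : ℕ))

lemma filter_card_eq_partialCard {m : ℕ} {L : List (Finset (Fin m))}
    (hL : IsOrderedPartition m L) {p : Fin m → Prop} [DecidablePred p] {n : ℕ}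
    (hn : n ≤ L.length)
    (hiff : ∀ (k : Fin L.length) (i' : Fin m), i' ∈ L.get k → (p i' ↔ (k : ℕ) < n)) :
    (Finset.univ.filter p).card = partialCard m L n := by
  have hset : (Finset.univ.filter p) = (Finset.range n).biUnion (fun k => L.getD k ∅) := by
    ext i'
    simp only [Finset.mem_filter, Finset.mem_univ, true_and, Finset.mem_biUnion,
      Finset.mem_range]
    obtain ⟨k, hk⟩ := exists_block hL i'
    constructor
    · intro hlt
      refine ⟨(k : ℕ), (hiff k i' hk).1 hlt, ?_⟩
      rw [List.getD_eq_getElem L ∅ k.isLt]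
      exact hk
    · rintro ⟨k', hk'n, hmem⟩
      have hk'len : k' < L.length := lt_of_lt_of_le hk'n hn
      rw [List.getD_eq_getElem L ∅ hk'len] at hmem
      have heq : (⟨k', hk'len⟩ : Fin L.length) = k := block_unique hL hmem hk
      refine (hiff k i' hk).2 ?_
      rw [← heq]
      exact hk'n
  rw [hset, Finset.card_biUnion, partialCard_eq_sum]
  intro a ha b hb hab
  show Disjoint (L.getD a ∅) (L.getD b ∅)
  rw [List.getD_eq_getElem L ∅ (lt_of_lt_of_le (Finset.mem_range.1 ha) hn),
    List.getD_eq_getElem L ∅ (lt_of_lt_of_le (Finset.mem_range.1 hb) hn)]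
  have hpw := List.pairwise_iff_get.1 hL.2.1
  rcases hab.lt_or_gt with h | h
  · exact hpw _ _ h
  · exact (hpw _ _ h).symm

lemma plt_ple_eq {m : ℕ} {L : List (Finset (Fin m))} (hL : IsOrderedPartition m L)
    {c : Fin m → ℝ} (hc : BlockResp m L c) {i : Fin m} {j : Fin L.length}
    (hij : i ∈ L.get j) :
    pltN m c i = partialCard m L j ∧ pleN m c i = partialCard m L ((j : ℕ) + 1) := by
  classical
  constructor
  · apply filter_card_eq_partialCard hL (le_of_lt j.isLt)
    intro k i' hk
    exact hc k j i' i hk hij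
  · apply filter_card_eq_partialCard hL (Nat.succ_le_of_lt j.isLt)
    intro k i' hk
    constructor
    · intro hle
      rcases lt_or_eq_of_le hle with hlt | heq
      · have := (hc k j i' i hk hij).1 hlt
        omega
      · by_contra hge
        push_neg at hge
        have hkj : (j : ℕ) < (k : ℕ) := by omega
        have := (hc j k i i' hij hk).2 hkj
        linarith
    · intro hkn
      rcases Nat.lt_or_ge (k : ℕ) (j : ℕ) with hlt | hge
      · exact le_of_lt ((hc k j i' i hk hij).2 hlt)
      · have hkj : (k : ℕ) = (j : ℕ) := by omega
        have : k = j := Fin.ext hkj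
        subst this
        by_contra hgt
        push_neg at hgt
        have := (hc k k i i' hij hk).1 hgt
        omega
-- ===== stage 5 =====

lemma compatible_iff_bounds {m : ℕ} {L : List (Finset (Fin m))} (hL : IsOrderedPartition m L)
    {c : Fin m → ℝ} (hc : BlockResp m L c) (σ : Equiv.Perm (Fin m)) :
    Compatible m L σ ↔ ∀ i, pltN m c i ≤ (σ i : ℕ) ∧ (σ i : ℕ) < pleN m c i := by
  constructor
  · intro h i
    obtain ⟨j, hj⟩ := exists_block hL i
    have hb := (h j i).1 hj
    rw [(plt_ple_eq hL hc hj).1, (plt_ple_eq hL hc hj).2]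
    exact hb
  · intro h j i
    obtain ⟨k, hk⟩ := exists_block hL i
    have hb := h i
    rw [(plt_ple_eq hL hc hk).1, (plt_ple_eq hL hc hk).2] at hb
    constructor
    · intro hij
      have : j = k := block_unique hL hij hk
      subst this
      exact hb
    · intro hbj
      have : j = k := interval_unique hL hbj.1 hbj.2 hb.1 hb.2
      subst this
      exact hk

-- level partition
noncomputable def levelPartition (m : ℕ) (c : Fin m → ℝ) : List (Finset (Fin m)) :=
  ((Finset.image c Finset.univ).sort (· ≤ ·)).map fun v => Finset.univ.filter fun i => c i = v

lemma levelPartition_isOP (m : ℕ) (c : Fin m → ℝ) :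
    IsOrderedPartition m (levelPartition m c) := by
  classical
  refine ⟨?_, ?_, ?_⟩
  · intro U hU
    rw [levelPartition, List.mem_map] at hU
    obtain ⟨v, hv, rfl⟩ := hU
    rw [Finset.mem_sort, Finset.mem_image] at hv
    obtain ⟨i, _, rfl⟩ := hv
    exact ⟨i, by simp⟩
  · rw [levelPartition, List.pairwise_map]
    have hnd : ((Finset.image c Finset.univ).sort (· ≤ ·)).Nodup := Finset.sort_nodup _ _
    refine List.Nodup.pairwise_of_forall_ne hnd ?_
    intro a _ b _ hab
    rw [Finset.disjoint_left]
    intro i hi hi'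
    rw [Finset.mem_filter] at hi hi'
    exact hab (hi.2 ▸ hi'.2.symm ▸ rfl)
  · ext i
    simp only [Finset.mem_univ, iff_true]
    rw [mem_foldr_union]
    refine ⟨Finset.univ.filter fun i' => c i' = c i, ?_, by simp⟩
    rw [levelPartition, List.mem_map]
    exact ⟨c i, by rw [Finset.mem_sort, Finset.mem_image]; exact ⟨i, by simp, rfl⟩, rfl⟩

lemma levelPartition_blockResp (m : ℕ) (c : Fin m → ℝ) :
    BlockResp m (levelPartition m c) c := by
  classical
  intro j k i i' hi hi'
  set l := (Finset.image c Finset.univ).sort (· ≤ ·) with hl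
  have hlen : (levelPartition m c).length = l.length := by
    rw [levelPartition, List.length_map]
  rw [List.get_eq_getElem] at hi hi'
  simp only [levelPartition, List.get_eq_getElem, List.getElem_map, Finset.mem_filter,
    Finset.mem_univ, true_and] at hi hi'
  rw [hi, hi']
  have hj' : (j : ℕ) < l.length := hlen ▸ j.isLt
  have hk' : (k : ℕ) < l.length := hlen ▸ k.isLt
  have hsort : l.SortedLT := Finset.sortedLT_sort _
  have hsm : StrictMono l.get := List.SortedLT.strictMono_get hsort
  show l.get ⟨(j : ℕ), hj'⟩ < l.get ⟨(k : ℕ), hk'⟩ ↔ (j : ℕ) < (k : ℕ)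
  rw [hsm.lt_iff_lt, Fin.mk_lt_mk]

-- canonical functional of an ordered partition
noncomputable def cOf (m : ℕ) (L : List (Finset (Fin m))) : Fin m → ℝ := fun i =>
  ((L.findIdx fun U => i ∈ U : ℕ) : ℝ)

lemma findIdx_eq_block {m : ℕ} {L : List (Finset (Fin m))} (hL : IsOrderedPartition m L)
    {i : Fin m} {j : Fin L.length} (hj : i ∈ L.get j) :
    (L.findIdx fun U => i ∈ U) = (j : ℕ) := by
  classical
  have hex : ∃ U ∈ L, (fun U => decide (i ∈ U)) U := ⟨L.get j, by exact List.get_mem L j, by simpa using hj⟩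
  have hlt : L.findIdx (fun U => i ∈ U) < L.length := List.findIdx_lt_length_of_exists hex
  have hp := List.findIdx_getElem (p := fun U => decide (i ∈ U)) (w := hlt)
  simp only [decide_eq_true_eq] at hp
  have : (⟨L.findIdx fun U => i ∈ U, hlt⟩ : Fin L.length) = j := block_unique hL hp hj
  rw [← this]

lemma cOf_blockResp {m : ℕ} {L : List (Finset (Fin m))} (hL : IsOrderedPartition m L) :
    BlockResp m L (cOf m L) := by
  intro j k i i' hi hi'
  unfold cOf
  rw [findIdx_eq_block hL hi, findIdx_eq_block hL hi', Nat.cast_lt]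
-- ===== stage 6: faces of the permutohedron =====

open scoped Classical in
noncomputable def allVerts (m : ℕ) : Finset (Fin m → ℝ) :=
  Finset.univ.image (permVertex m)

open scoped Classical in
noncomputable def compatVerts (m : ℕ) (L : List (Finset (Fin m))) : Finset (Fin m → ℝ) :=
  (Finset.univ.filter fun σ => Compatible m L σ).image (permVertex m)

lemma permutohedron_eq (m : ℕ) :
    permutohedron m = convexHull ℝ ((allVerts m : Finset (Fin m → ℝ)) : Set (Fin m → ℝ)) := by
  classical
  rw [permutohedron]
  congr 1
  ext x
  simp [allVerts, eq_comm]

lemma permFace_eq (m : ℕ) (L : List (Finset (Fin m))) :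
    permFace m L = convexHull ℝ ((compatVerts m L : Finset (Fin m → ℝ)) : Set (Fin m → ℝ)) := by
  classical
  rw [permFace]
  congr 1
  ext x
  simp only [compatVerts, Finset.coe_image, Finset.coe_filter, Finset.mem_univ, true_and,
    Set.mem_image, Set.mem_setOf_eq]
  constructor
  · rintro ⟨σ, hσ, rfl⟩; exact ⟨σ, hσ, rfl⟩
  · rintro ⟨σ, hσ, rfl⟩; exact ⟨σ, hσ, rfl⟩

lemma permVertex_injective (m : ℕ) : Function.Injective (permVertex m) := by
  intro σ τ h
  ext i
  have := congrFun h i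
  simp only [permVertex, add_left_inj, Nat.cast_inj] at this
  exact this

lemma maximizer_iff_compatible {m : ℕ} {L : List (Finset (Fin m))}
    (hL : IsOrderedPartition m L) {c : Fin m → ℝ} (hc : BlockResp m L c)
    (σ : Equiv.Perm (Fin m)) :
    (∀ τ : Equiv.Perm (Fin m), phiC m c (permVertex m τ) ≤ phiC m c (permVertex m σ)) ↔
      Compatible m L σ := by
  have h1 : (∀ τ : Equiv.Perm (Fin m),
      phiC m c (permVertex m τ) ≤ phiC m c (permVertex m σ)) ↔
      ∀ τ : Equiv.Perm (Fin m), ∑ i, c i * gval m (τ i) ≤ ∑ i, c i * gval m (σ i) := by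
    constructor <;> intro h τ <;> have := h τ <;>
      simp only [phiC_vertex, add_le_add_iff_right] at * <;> exact this
  rw [h1, maximizer_iff_monovary, monovary_iff_bounds, ← compatible_iff_bounds hL hc]

lemma face_eq_permFace {m : ℕ} {L : List (Finset (Fin m))}
    (hL : IsOrderedPartition m L) {c : Fin m → ℝ} (hc : BlockResp m L c) :
    {x ∈ permutohedron m | ∀ y ∈ permutohedron m, phiC m c y ≤ phiC m c x} = permFace m L := by
  classical
  rw [permutohedron_eq, exposed_face_convexHull, permFace_eq]
  congr 1
  ext z
  simp only [Finset.coe_filter, Set.mem_setOf_eq, allVerts, compatVerts, Finset.mem_coe,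
    Finset.mem_image, Finset.mem_univ, true_and, Finset.mem_filter]
  constructor
  · rintro ⟨⟨σ, rfl⟩, hmax⟩
    refine ⟨σ, ?_, rfl⟩
    rw [← maximizer_iff_compatible hL hc]
    intro τ
    exact hmax _ ⟨τ, rfl⟩
  · rintro ⟨σ, hσ, rfl⟩
    refine ⟨⟨σ, rfl⟩, ?_⟩
    rintro y ⟨τ, rfl⟩
    exact (maximizer_iff_compatible hL hc σ).2 hσ τ

lemma exists_compatible {m : ℕ} {L : List (Finset (Fin m))} (hL : IsOrderedPartition m L) :
    ∃ σ : Equiv.Perm (Fin m), Compatible m L σ := by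
  obtain ⟨σ, hσ⟩ := exists_monovary_perm m (cOf m L)
  refine ⟨σ, ?_⟩
  rw [compatible_iff_bounds hL (cOf_blockResp hL), ← monovary_iff_bounds]
  exact hσ

lemma permFace_nonempty {m : ℕ} {L : List (Finset (Fin m))} (hL : IsOrderedPartition m L) :
    (permFace m L).Nonempty := by
  obtain ⟨σ, hσ⟩ := exists_compatible hL
  exact ⟨permVertex m σ, subset_convexHull ℝ _ ⟨σ, hσ, rfl⟩⟩
-- ===== stage 7: vertex recovery =====

lemma plt_perm (m : ℕ) (τ : Equiv.Perm (Fin m)) (i : Fin m) :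
    pltN m (fun i' => gval m (τ i')) i = (τ i : ℕ) := by
  unfold pltN
  rw [← card_filter_perm_lt m τ i]
  congr 1
  ext i'
  simp only [Finset.mem_filter, Finset.mem_univ, true_and]
  rw [gval_lt_iff]

lemma ple_perm (m : ℕ) (τ : Equiv.Perm (Fin m)) (i : Fin m) :
    pleN m (fun i' => gval m (τ i')) i = (τ i : ℕ) + 1 := by
  classical
  unfold pleN
  have hset : (Finset.univ.filter fun i' => gval m (τ i') ≤ gval m (τ i)) =
      insert i (Finset.univ.filter fun i' => τ i' < τ i) := by
    ext i'
    simp only [Finset.mem_filter, Finset.mem_univ, true_and, Finset.mem_insert]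
    unfold gval
    rw [Nat.cast_le]
    constructor
    · intro h
      rcases lt_or_eq_of_le h with hlt | heq
      · exact Or.inr (by rwa [← Fin.lt_def] at hlt)
      · exact Or.inl (τ.injective (Fin.ext heq))
    · rintro (rfl | hlt)
      · exact le_refl _
      · exact le_of_lt hlt
  rw [hset, Finset.card_insert_of_notMem (by simp), card_filter_perm_lt m τ i]

lemma compatible_of_mem_permFace {m : ℕ} {L : List (Finset (Fin m))}
    (hL : IsOrderedPartition m L) {τ : Equiv.Perm (Fin m)}
    (h : permVertex m τ ∈ permFace m L) : Compatible m L τ := by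
  classical
  rw [permFace_eq] at h
  set cτ : Fin m → ℝ := fun i' => gval m (τ i') with hcτ
  have hmonoτ : Monovary cτ fun i => gval m (τ i) := fun i j hij => le_of_lt hij
  have hmem : permVertex m τ ∈ compatVerts m L := by
    refine eq_of_unique_max (φ := phiC m cτ) h ?_ ?_
    · rintro z hz
      rw [compatVerts, Finset.mem_image] at hz
      obtain ⟨σ, _, rfl⟩ := hz
      simp only [phiC_vertex, add_le_add_iff_right]
      exact sum_le_of_monovary cτ τ hmonoτ σ
    · rintro z hz heq
      rw [compatVerts, Finset.mem_image] at hz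
      obtain ⟨σ, _, rfl⟩ := hz
      simp only [phiC_vertex, add_left_inj] at heq
      have hmono := (sum_eq_iff_monovary cτ τ hmonoτ σ).1 heq
      have hb := (monovary_iff_bounds m cτ σ).1 hmono
      have hστ : σ = τ := by
        ext i
        have := hb i
        rw [plt_perm m τ i, ple_perm m τ i] at this
        omega
      rw [hστ]
  rw [compatVerts, Finset.mem_image] at hmem
  obtain ⟨σ, hσ, hve⟩ := hmem
  rw [Finset.mem_filter] at hσ
  have : σ = τ := permVertex_injective m hve
  exact this ▸ hσ.2
-- ===== stage 8: uniqueness =====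

lemma achievable {m : ℕ} {L : List (Finset (Fin m))} (hL : IsOrderedPartition m L)
    {σ : Equiv.Perm (Fin m)} (hσ : Compatible m L σ) {j : Fin L.length} {i : Fin m}
    (hij : i ∈ L.get j) {v : ℕ}
    (h1 : partialCard m L j ≤ v) (h2 : v < partialCard m L ((j : ℕ) + 1)) :
    ∃ σ' : Equiv.Perm (Fin m), Compatible m L σ' ∧ (σ' i : ℕ) = v := by
  have hvm : v < m := lt_of_lt_of_le h2 (partialCard_le hL _)
  set w : Fin m := ⟨v, hvm⟩ with hw
  set σ' : Equiv.Perm (Fin m) := σ.trans (Equiv.swap (σ i) w) with hσ'def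
  have hInt := (hσ j i).1 hij
  have same : ∀ (a b : ℕ), partialCard m L j ≤ a → a < partialCard m L ((j : ℕ) + 1) →
      partialCard m L j ≤ b → b < partialCard m L ((j : ℕ) + 1) →
      ∀ k : Fin L.length,
        (partialCard m L k ≤ a ∧ a < partialCard m L ((k : ℕ) + 1)) ↔
        (partialCard m L k ≤ b ∧ b < partialCard m L ((k : ℕ) + 1)) := by
    intro a b ha1 ha2 hb1 hb2 k
    constructor
    · rintro ⟨x1, x2⟩
      have : k = j := interval_unique hL x1 x2 ha1 ha2
      subst this
      exact ⟨hb1, hb2⟩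
    · rintro ⟨x1, x2⟩
      have : k = j := interval_unique hL x1 x2 hb1 hb2
      subst this
      exact ⟨ha1, ha2⟩
  have hσi : σ' i = w := by
    rw [hσ'def]
    simp [Equiv.trans_apply, Equiv.swap_apply_left]
  refine ⟨σ', ?_, by rw [hσi]⟩
  intro k i'
  rw [hσ k i']
  by_cases hc1 : σ i' = σ i
  · have hs : σ' i' = w := by
      rw [hσ'def]
      simp [Equiv.trans_apply, hc1, Equiv.swap_apply_left]
    rw [hs, hc1]
    exact same (σ i : ℕ) (w : ℕ) hInt.1 hInt.2 h1 h2 k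
  · by_cases hc2 : σ i' = w
    · have hs : σ' i' = σ i := by
        rw [hσ'def]
        simp [Equiv.trans_apply, hc2, Equiv.swap_apply_right]
      rw [hs, hc2]
      exact same (w : ℕ) (σ i : ℕ) h1 h2 hInt.1 hInt.2 k
    · have hs : σ' i' = σ i' := by
        rw [hσ'def]
        simp only [Equiv.trans_apply]
        exact Equiv.swap_apply_of_ne_of_ne hc1 hc2
      rw [hs]

lemma plt_cOf_le {m : ℕ} {L L' : List (Finset (Fin m))}
    (hL : IsOrderedPartition m L) (hL' : IsOrderedPartition m L')
    (hS : ∀ σ, Compatible m L σ → Compatible m L' σ) (i : Fin m) :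
    pltN m (cOf m L') i ≤ pltN m (cOf m L) i := by
  obtain ⟨σ₀, hσ₀⟩ := exists_compatible hL
  obtain ⟨j, hj⟩ := exists_block hL i
  obtain ⟨σ', hσ', hv⟩ := achievable hL hσ₀ hj (le_refl _) (partialCard_lt hL j.isLt)
  have hb := ((compatible_iff_bounds hL' (cOf_blockResp hL') σ').1 (hS σ' hσ') i).1
  rw [hv] at hb
  have := (plt_ple_eq hL (cOf_blockResp hL) hj).1
  omega

lemma eq_of_plt_eq {m : ℕ} {L L' : List (Finset (Fin m))}
    (hL : IsOrderedPartition m L) (hL' : IsOrderedPartition m L')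
    (hp : ∀ i, pltN m (cOf m L) i = pltN m (cOf m L') i) : L = L' := by
  have hblk : ∀ j (hj : j < L.length) (hj' : j < L'.length),
      partialCard m L j = partialCard m L' j → L.get ⟨j, hj⟩ = L'.get ⟨j, hj'⟩ := by
    intro j hj hj' hpc
    have hone : ∀ (M : List (Finset (Fin m))) (hM : IsOrderedPartition m M) (hjM : j < M.length),
        ∀ i : Fin m, i ∈ M.get ⟨j, hjM⟩ ↔ pltN m (cOf m M) i = partialCard m M j := by
      intro M hM hjM i
      constructor
      · intro hi
        exact (plt_ple_eq hM (cOf_blockResp hM) hi).1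
      · intro hpi
        obtain ⟨k, hk⟩ := exists_block hM i
        have hpk := (plt_ple_eq hM (cOf_blockResp hM) hk).1
        have hkj : (k : ℕ) = j :=
          partialCard_injOn hM (le_of_lt k.isLt) (le_of_lt hjM) (by omega)
        have heq : (⟨j, hjM⟩ : Fin M.length) = k := Fin.ext hkj.symm
        rw [heq]
        exact hk
    ext i
    rw [hone L hL hj i, hone L' hL' hj' i, hp i, hpc]
  have key : ∀ j, j ≤ L.length → j ≤ L'.length → partialCard m L j = partialCard m L' j := by
    intro j
    induction j with
    | zero => intro _ _; simp [partialCard]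
    | succ j ih =>
      intro hj hj'
      have hjl : j < L.length := hj
      have hjl' : j < L'.length := hj'
      have hpc := ih (le_of_lt hjl) (le_of_lt hjl')
      have hb := hblk j hjl hjl' hpc
      rw [partialCard_succ, partialCard_succ, hpc,
        List.getD_eq_getElem L ∅ hjl, List.getD_eq_getElem L' ∅ hjl']
      congr 1
      exact congrArg Finset.card hb
  have hlen : L.length = L'.length := by
    by_contra hne
    rcases Ne.lt_or_gt hne with hlt | hlt
    · have e1 : partialCard m L' L.length = m := by
        rw [← key L.length (le_refl _) (le_of_lt hlt), partialCard_total hL]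
      have e2 : partialCard m L' L.length < partialCard m L' (L.length + 1) :=
        partialCard_lt hL' hlt
      have e3 : partialCard m L' (L.length + 1) ≤ m := partialCard_le hL' _
      omega
    · have e1 : partialCard m L L'.length = m := by
        rw [key L'.length (le_of_lt hlt) (le_refl _), partialCard_total hL']
      have e2 : partialCard m L L'.length < partialCard m L (L'.length + 1) :=
        partialCard_lt hL hlt
      have e3 : partialCard m L (L'.length + 1) ≤ m := partialCard_le hL _
      omega
  apply List.ext_get hlen
  intro n h1 h2
  exact hblk n h1 h2 (key n (le_of_lt h1) (le_of_lt h2))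

lemma permFace_inj {m : ℕ} {L L' : List (Finset (Fin m))}
    (hL : IsOrderedPartition m L) (hL' : IsOrderedPartition m L')
    (h : permFace m L = permFace m L') : L = L' := by
  have hS : ∀ σ, Compatible m L σ → Compatible m L' σ := fun σ hc =>
    compatible_of_mem_permFace hL'
      (h ▸ (subset_convexHull ℝ _ ⟨σ, hc, rfl⟩ : permVertex m σ ∈ permFace m L))
  have hS' : ∀ σ, Compatible m L' σ → Compatible m L σ := fun σ hc =>
    compatible_of_mem_permFace hL
      (h ▸ (subset_convexHull ℝ _ ⟨σ, hc, rfl⟩ : permVertex m σ ∈ permFace m L'))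
  exact eq_of_plt_eq hL hL' fun i =>
    le_antisymm (plt_cOf_le hL' hL hS' i) (plt_cOf_le hL hL' hS i)
-- ===== final theorem =====

theorem stmt2 (m : ℕ) (hm : 1 ≤ m) :
    (∀ F : Set (Fin m → ℝ), F.Nonempty →
      (∃ φ : (Fin m → ℝ) →ₗ[ℝ] ℝ,
        F = {x ∈ permutohedron m | ∀ y ∈ permutohedron m, φ y ≤ φ x}) →
      ∃! L : List (Finset (Fin m)), IsOrderedPartition m L ∧ F = permFace m L) ∧
    (∀ L : List (Finset (Fin m)), IsOrderedPartition m L →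
      (permFace m L).Nonempty ∧
      ∃ φ : (Fin m → ℝ) →ₗ[ℝ] ℝ,
        permFace m L = {x ∈ permutohedron m | ∀ y ∈ permutohedron m, φ y ≤ φ x}) := by
  constructor
  · rintro F - ⟨φ, hF⟩
    set c : Fin m → ℝ := fun i => φ (fun j => if i = j then (1 : ℝ) else 0) with hc
    have hphi : ∀ y, φ y = phiC m c y := by
      intro y
      rw [LinearMap.pi_apply_eq_sum_univ φ y, phiC_apply]
      congr 1
      ext i
      rw [smul_eq_mul, mul_comm]
    have hOP : IsOrderedPartition m (levelPartition m c) := levelPartition_isOP m c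
    have hFc : F = permFace m (levelPartition m c) := by
      rw [hF, ← face_eq_permFace hOP (levelPartition_blockResp m c)]
      ext x
      simp only [Set.mem_setOf_eq]
      constructor
      · rintro ⟨h1, h2⟩
        exact ⟨h1, fun y hy => by rw [← hphi y, ← hphi x]; exact h2 y hy⟩
      · rintro ⟨h1, h2⟩
        exact ⟨h1, fun y hy => by rw [hphi y, hphi x]; exact h2 y hy⟩
    refine ⟨levelPartition m c, ⟨hOP, hFc⟩, ?_⟩
    rintro L' ⟨hL', hFL'⟩
    exact permFace_inj hL' hOP (hFL'.symm.trans hFc)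
  · intro L hL
    exact ⟨permFace_nonempty hL,
      phiC m (cOf m L), (face_eq_permFace hL (cOf_blockResp hL)).symm⟩
end

section
/- For every simplicial complex K on the vertex set [m], the following two subsets of Perm^{m−1} coincide: (a) Perm^{m−1} minus the union, over all subsets I ∉ K and all ordered partitions (U_1 | ⋯ | U_p) of [m] with U_j = I for some j, of the relative (intrinsic) interiors of the faces F(U_1 | ⋯ | U_p); and (b) the union of the faces F(U_1 | ⋯ | U_p) over all ordered partitions of [m] all of whose parts U_j are simplices of K. -/
/-- A simplicial complex on the vertex set `[m]` (modelled as `Fin m`):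
a collection of subsets closed under taking subsets and containing every singleton. -/
def IsSimplicialComplex (m : ℕ) (K : Set (Finset (Fin m))) : Prop :=
  (∀ σ ∈ K, ∀ τ, τ ⊆ σ → τ ∈ K) ∧ (∀ i : Fin m, ({i} : Finset (Fin m)) ∈ K)

namespace PermCx
open Finset

def tN (k : ℕ) : ℕ := ∑ i ∈ Finset.range k, (i + 1)

def tR (k : ℕ) : ℝ := (tN k : ℝ)

lemma tN_succ (k : ℕ) : tN (k + 1) = tN k + (k + 1) := by
  simp [tN, Finset.sum_range_succ]

lemma two_tN (k : ℕ) : 2 * tN k = k * (k + 1) := by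
  induction k with
  | zero => simp [tN]
  | succ n ih => rw [tN_succ]; ring_nf; ring_nf at ih; omega

lemma tN_mono : Monotone tN := by
  intro a b h
  induction h with
  | refl => exact le_rfl
  | step h ih => rw [tN_succ]; omega

lemma tN_supermod {a b c u : ℕ} (hc : c < a) (hc' : c < b) (h : u + c = a + b) :
    tN a + tN b < tN u + tN c := by
  have h2a := two_tN a; have h2b := two_tN b; have h2c := two_tN c; have h2u := two_tN u
  nlinarith [h, hc, hc']

lemma K1 (s : Finset ℕ) : tN s.card ≤ ∑ i ∈ s, (i + 1) := by
  induction s using Finset.strongInduction with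
  | _ s ih =>
    rcases s.eq_empty_or_nonempty with rfl | hs
    · simp [tN]
    · have hmax := s.max'_mem hs
      have hpos : 1 ≤ s.card := Finset.card_pos.mpr hs
      have hcard : s.card ≤ s.max' hs + 1 := by
        have : s ⊆ Finset.range (s.max' hs + 1) := fun i hi =>
          Finset.mem_range.mpr (Nat.lt_succ_of_le (s.le_max' i hi))
        simpa using Finset.card_le_card this
      have hlt : s.erase (s.max' hs) ⊂ s := Finset.erase_ssubset hmax
      have ihe := ih _ hlt
      rw [Finset.card_erase_of_mem hmax] at ihe
      have hsum : (s.max' hs + 1) + ∑ i ∈ s.erase (s.max' hs), (i + 1) = ∑ i ∈ s, (i + 1) :=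
        Finset.add_sum_erase _ _ hmax
      have h2 : tN s.card = tN (s.card - 1) + s.card := by
        conv_lhs => rw [show s.card = (s.card - 1) + 1 by omega, tN_succ]
        omega
      omega

lemma K1e (s : Finset ℕ) (h : ∑ i ∈ s, (i + 1) = tN s.card) : s = Finset.range s.card := by
  induction s using Finset.strongInduction with
  | _ s ih =>
    rcases s.eq_empty_or_nonempty with rfl | hs
    · simp
    · have hmax := s.max'_mem hs
      have hpos : 1 ≤ s.card := Finset.card_pos.mpr hs
      have hcard : s.card ≤ s.max' hs + 1 := by
        have : s ⊆ Finset.range (s.max' hs + 1) := fun i hi =>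
          Finset.mem_range.mpr (Nat.lt_succ_of_le (s.le_max' i hi))
        simpa using Finset.card_le_card this
      have hlt : s.erase (s.max' hs) ⊂ s := Finset.erase_ssubset hmax
      have hK := K1 (s.erase (s.max' hs))
      rw [Finset.card_erase_of_mem hmax] at hK
      have hsum : (s.max' hs + 1) + ∑ i ∈ s.erase (s.max' hs), (i + 1) = ∑ i ∈ s, (i + 1) :=
        Finset.add_sum_erase _ _ hmax
      have h2 : tN s.card = tN (s.card - 1) + s.card := by
        conv_lhs => rw [show s.card = (s.card - 1) + 1 by omega, tN_succ]
        omega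
      obtain ⟨n, hn⟩ : ∃ n, s.card = n + 1 := ⟨s.card - 1, by omega⟩
      have hmx : s.max' hs = n := by omega
      have hsum' : ∑ i ∈ s.erase (s.max' hs), (i + 1) = tN (s.card - 1) := by omega
      have heq := ih _ hlt (by rw [Finset.card_erase_of_mem hmax]; exact hsum')
      rw [Finset.card_erase_of_mem hmax, hn] at heq
      simp only [Nat.add_sub_cancel] at heq
      have hins : s = insert (s.max' hs) (s.erase (s.max' hs)) := (Finset.insert_erase hmax).symm
      rw [hn, Finset.range_add_one, ← hmx]
      nth_rewrite 1 [hins]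
      rw [heq, hmx]



open Finset

variable {m : ℕ}

/-- the linear functional `x ↦ ∑_{i ∈ S} x i` -/
def gS (S : Finset (Fin m)) (x : Fin m → ℝ) : ℝ := ∑ i ∈ S, x i

lemma gS_add (S : Finset (Fin m)) (x y : Fin m → ℝ) : gS S (x + y) = gS S x + gS S y := by
  simp [gS, Finset.sum_add_distrib]

lemma gS_smul (S : Finset (Fin m)) (c : ℝ) (x : Fin m → ℝ) : gS S (c • x) = c * gS S x := by
  simp [gS, Finset.mul_sum]

lemma gS_continuous (S : Finset (Fin m)) : Continuous (gS S) :=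
  continuous_finset_sum _ fun i _ => continuous_apply i

/-- `S` is tight for `x` -/
def Tight (x : Fin m → ℝ) (S : Finset (Fin m)) : Prop := gS S x = tR S.card

/-- membership in the H-description of the permutohedron -/
def inH (x : Fin m → ℝ) : Prop :=
  (∀ S : Finset (Fin m), tR S.card ≤ gS S x) ∧ Tight x Finset.univ

lemma tight_empty (x : Fin m → ℝ) : Tight x (∅ : Finset (Fin m)) := by
  simp [Tight, gS, tR, tN]

/-- prefix union of the first `j` parts -/
def Pref (L : List (Finset (Fin m))) (j : ℕ) : Finset (Fin m) :=
  (L.take j).foldr (· ∪ ·) ∅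

lemma mem_foldr_union (l : List (Finset (Fin m))) (i : Fin m) :
    i ∈ l.foldr (· ∪ ·) ∅ ↔ ∃ U ∈ l, i ∈ U := by
  induction l with
  | nil => simp
  | cons U t ih => simp [List.foldr_cons, Finset.mem_union, ih]

lemma Pref_zero (L : List (Finset (Fin m))) : Pref L 0 = ∅ := rfl

lemma Pref_succ (L : List (Finset (Fin m))) (j : ℕ) (h : j < L.length) :
    Pref L (j + 1) = Pref L j ∪ L.get ⟨j, h⟩ := by
  ext i
  simp only [Pref, mem_foldr_union, Finset.mem_union]
  constructor
  · rintro ⟨U, hU, hi⟩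
    rw [List.take_succ] at hU
    rcases List.mem_append.mp hU with h' | h'
    · exact Or.inl ⟨U, h', hi⟩
    · refine Or.inr ?_
      rw [List.getElem?_eq_getElem h] at h'
      simp at h'
      rw [h'] at hi
      exact hi
  · rintro (⟨U, hU, hi⟩ | hi)
    · exact ⟨U, by rw [List.take_succ]; exact List.mem_append.mpr (Or.inl hU), hi⟩
    · refine ⟨L.get ⟨j, h⟩, ?_, hi⟩
      rw [List.take_succ]
      refine List.mem_append.mpr (Or.inr ?_)
      rw [List.getElem?_eq_getElem h]
      simp [List.get_eq_getElem]

lemma Pref_mono (L : List (Finset (Fin m))) {j k : ℕ} (h : j ≤ k) : Pref L j ⊆ Pref L k := by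
  intro i hi
  simp only [Pref, mem_foldr_union] at hi ⊢
  obtain ⟨U, hU, hiU⟩ := hi
  refine ⟨U, ?_, hiU⟩
  have : L.take j = (L.take k).take j := by rw [List.take_take, min_eq_left h]
  rw [this] at hU
  exact List.mem_of_mem_take hU

lemma Pref_length (L : List (Finset (Fin m))) : Pref L L.length = L.foldr (· ∪ ·) ∅ := by
  simp [Pref, List.take_length]

lemma Pref_univ {L : List (Finset (Fin m))} (hOP : IsOrderedPartition m L) :
    Pref L L.length = Finset.univ := by rw [Pref_length]; exact hOP.2.2

lemma Pref_of_ge (L : List (Finset (Fin m))) {j : ℕ} (h : L.length ≤ j) :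
    Pref L j = Pref L L.length := by
  simp [Pref, List.take_of_length_le h, List.take_length]

lemma mem_Pref (L : List (Finset (Fin m))) (j : ℕ) (i : Fin m) :
    i ∈ Pref L j ↔ ∃ k : ℕ, ∃ hk : k < L.length, k < j ∧ i ∈ L.get ⟨k, hk⟩ := by
  simp only [Pref, mem_foldr_union]
  constructor
  · rintro ⟨U, hU, hi⟩
    obtain ⟨k, hk, hget⟩ := List.mem_iff_getElem.mp hU
    have hk' : k < j ⊓ L.length := by rwa [List.length_take] at hk
    refine ⟨k, by omega, by omega, ?_⟩
    rw [List.getElem_take] at hget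
    rw [List.get_eq_getElem]
    rw [hget]
    exact hi
  · rintro ⟨k, hk, hkj, hi⟩
    refine ⟨L.get ⟨k, hk⟩, ?_, hi⟩
    rw [List.mem_iff_getElem]
    refine ⟨k, by rw [List.length_take]; omega, ?_⟩
    rw [List.getElem_take]
    rfl

lemma pc_zero (L : List (Finset (Fin m))) : partialCard m L 0 = 0 := rfl

lemma pc_succ (L : List (Finset (Fin m))) (j : ℕ) (h : j < L.length) :
    partialCard m L (j + 1) = partialCard m L j + (L.get ⟨j, h⟩).card := by
  unfold partialCard
  rw [List.take_succ, List.getElem?_eq_getElem h, List.map_append, List.sum_append]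
  simp [List.get_eq_getElem]

lemma pc_of_ge (L : List (Finset (Fin m))) {j : ℕ} (h : L.length ≤ j) :
    partialCard m L j = partialCard m L L.length := by
  unfold partialCard
  rw [List.take_of_length_le h, List.take_length]

lemma pc_mono (L : List (Finset (Fin m))) : Monotone (partialCard m L) := by
  intro a b h
  induction h with
  | refl => exact le_rfl
  | @step k h ih =>
    rcases lt_or_ge k L.length with hk | hk
    · rw [pc_succ L k hk]; omega
    · rw [pc_of_ge L (by omega : L.length ≤ k + 1), pc_of_ge L hk] at *; exact ih

lemma disj_Pref_get {L : List (Finset (Fin m))} (hP : L.Pairwise Disjoint)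
    {j : ℕ} (h : j < L.length) : Disjoint (Pref L j) (L.get ⟨j, h⟩) := by
  rw [Finset.disjoint_left]
  intro i hi hig
  rw [mem_Pref] at hi
  obtain ⟨k, hk, hkj, hik⟩ := hi
  have := (List.pairwise_iff_getElem.mp hP) k j hk h (by omega)
  rw [Finset.disjoint_left] at this
  exact this (by simpa [List.get_eq_getElem] using hik) (by simpa [List.get_eq_getElem] using hig)

lemma card_Pref {L : List (Finset (Fin m))} (hP : L.Pairwise Disjoint) (j : ℕ) :
    (Pref L j).card = partialCard m L j := by
  induction j with
  | zero => simp [Pref_zero, pc_zero]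
  | succ n ih =>
    rcases lt_or_ge n L.length with hn | hn
    · rw [Pref_succ L n hn, Finset.card_union_of_disjoint (disj_Pref_get hP hn),
        pc_succ L n hn, ih]
    · rw [Pref_of_ge L (by omega : L.length ≤ n + 1), Pref_of_ge L hn] at *
      rw [pc_of_ge L (by omega : L.length ≤ n + 1), pc_of_ge L hn] at *
      exact ih

lemma compat_pref {L : List (Finset (Fin m))} {σ : Equiv.Perm (Fin m)}
    (hc : Compatible m L σ) (j : ℕ) (i : Fin m) :
    i ∈ Pref L j ↔ (σ i : ℕ) < partialCard m L j := by
  induction j with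
  | zero => simp [Pref_zero, pc_zero]
  | succ n ih =>
    rcases lt_or_ge n L.length with hn | hn
    · rw [Pref_succ L n hn, Finset.mem_union]
      have hcn := hc ⟨n, hn⟩ i
      simp only at hcn
      have hmono : partialCard m L n ≤ partialCard m L (n + 1) := pc_mono L (by omega)
      constructor
      · rintro (h | h)
        · exact lt_of_lt_of_le (ih.mp h) hmono
        · exact (hcn.mp h).2
      · intro h
        rcases lt_or_ge ((σ i : ℕ)) (partialCard m L n) with h' | h'
        · exact Or.inl (ih.mpr h')
        · exact Or.inr (hcn.mpr ⟨h', h⟩)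
    · rw [Pref_of_ge L (by omega : L.length ≤ n + 1), Pref_of_ge L hn] at *
      rw [pc_of_ge L (by omega : L.length ≤ n + 1), pc_of_ge L hn] at *
      exact ih

lemma compat_of_pref {L : List (Finset (Fin m))} (hOP : IsOrderedPartition m L)
    {σ : Equiv.Perm (Fin m)}
    (h : ∀ j ≤ L.length, ∀ i : Fin m, (i ∈ Pref L j ↔ (σ i : ℕ) < partialCard m L j)) :
    Compatible m L σ := by
  intro j i
  have hjl : (j : ℕ) < L.length := j.isLt
  have h1 := h (j : ℕ) (by omega) i
  have h2 := h ((j : ℕ) + 1) (by omega) i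
  have hPs : Pref L ((j : ℕ) + 1) = Pref L (j : ℕ) ∪ L.get ⟨(j : ℕ), hjl⟩ :=
    Pref_succ L (j : ℕ) hjl
  have hdisj := disj_Pref_get hOP.2.1 hjl
  constructor
  · intro hi
    have hg : i ∈ L.get ⟨(j : ℕ), hjl⟩ := by convert hi
    have hiP : i ∈ Pref L ((j : ℕ) + 1) := by
      rw [hPs]; exact Finset.mem_union_right _ hg
    have hniP : i ∉ Pref L (j : ℕ) := fun hc =>
      (Finset.disjoint_left.mp hdisj) hc hg
    refine ⟨?_, h2.mp hiP⟩
    by_contra hlt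
    push_neg at hlt
    exact hniP (h1.mpr hlt)
  · rintro ⟨hl, hu⟩
    have hiP : i ∈ Pref L ((j : ℕ) + 1) := h2.mpr hu
    have hniP : i ∉ Pref L (j : ℕ) := fun hc => by
      have := h1.mp hc; omega
    rw [hPs, Finset.mem_union] at hiP
    rcases hiP with h' | h'
    · exact absurd h' hniP
    · convert h'

lemma sigma_val_inj (σ : Equiv.Perm (Fin m)) :
    Function.Injective (fun i : Fin m => ((σ i : Fin m) : ℕ)) :=
  Fin.val_injective.comp σ.injective

lemma gS_vertex (S : Finset (Fin m)) (σ : Equiv.Perm (Fin m)) :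
    gS S (permVertex m σ) = ((∑ k ∈ S.image (fun i => ((σ i : Fin m) : ℕ)), (k + 1) : ℕ) : ℝ) := by
  rw [Finset.sum_image (fun a _ b _ h => sigma_val_inj σ h)]
  simp [gS, permVertex]

lemma card_image_sigma (S : Finset (Fin m)) (σ : Equiv.Perm (Fin m)) :
    (S.image (fun i => ((σ i : Fin m) : ℕ))).card = S.card :=
  Finset.card_image_of_injective S (sigma_val_inj σ)

lemma vertex_ge (S : Finset (Fin m)) (σ : Equiv.Perm (Fin m)) :
    tR S.card ≤ gS S (permVertex m σ) := by
  rw [gS_vertex, tR]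
  have := K1 (S.image (fun i => ((σ i : Fin m) : ℕ)))
  rw [card_image_sigma] at this
  exact_mod_cast this

lemma vertex_tight_iff (S : Finset (Fin m)) (σ : Equiv.Perm (Fin m)) :
    Tight (permVertex m σ) S ↔ ∀ i : Fin m, (i ∈ S ↔ ((σ i : Fin m) : ℕ) < S.card) := by
  unfold Tight
  rw [gS_vertex, tR]
  constructor
  · intro h
    have hnat : ∑ k ∈ S.image (fun i => ((σ i : Fin m) : ℕ)), (k + 1) = tN S.card := by
      exact_mod_cast h
    have hrange := K1e (S.image (fun i => ((σ i : Fin m) : ℕ)))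
      (by rw [card_image_sigma]; exact hnat)
    rw [card_image_sigma] at hrange
    intro i
    constructor
    · intro hi
      have : ((σ i : Fin m) : ℕ) ∈ S.image (fun i => ((σ i : Fin m) : ℕ)) :=
        Finset.mem_image_of_mem _ hi
      rw [hrange] at this
      exact Finset.mem_range.mp this
    · intro hi
      have : ((σ i : Fin m) : ℕ) ∈ Finset.range S.card := Finset.mem_range.mpr hi
      rw [← hrange] at this
      obtain ⟨i', hi', hii'⟩ := Finset.mem_image.mp this
      rwa [sigma_val_inj σ hii'] at hi'
  · intro h
    have hrange : S.image (fun i => ((σ i : Fin m) : ℕ)) = Finset.range S.card := by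
      apply Finset.Subset.antisymm
      · intro k hk
        obtain ⟨i, hi, rfl⟩ := Finset.mem_image.mp hk
        exact Finset.mem_range.mpr ((h i).mp hi)
      · intro k hk
        rw [Finset.mem_range] at hk
        have hkm : k < m := lt_of_lt_of_le hk (by simpa using Finset.card_le_card (S.subset_univ))
        refine Finset.mem_image.mpr ⟨σ.symm ⟨k, hkm⟩, ?_, by simp⟩
        apply (h (σ.symm ⟨k, hkm⟩)).mpr
        simp [hk]
    rw [hrange]
    rfl

open scoped Classical in
noncomputable def VF (m : ℕ) : Finset (Fin m → ℝ) := Finset.univ.image (permVertex m)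

lemma mem_VF {m : ℕ} (y : Fin m → ℝ) : y ∈ VF m ↔ ∃ σ : Equiv.Perm (Fin m), y = permVertex m σ := by
  classical
  constructor
  · intro hy; obtain ⟨σ, _, rfl⟩ := Finset.mem_image.mp hy; exact ⟨σ, rfl⟩
  · rintro ⟨σ, rfl⟩
    exact Finset.mem_image.mpr ⟨σ, Finset.mem_univ _, rfl⟩

lemma perm_hull : permutohedron m = convexHull ℝ (VF m : Set (Fin m → ℝ)) := by
  unfold permutohedron
  congr 1
  ext x
  simp only [Set.mem_setOf_eq, Finset.coe_sort_coe, Finset.mem_coe, mem_VF]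

/-- the vertex set of the face -/
def CS (m : ℕ) (L : List (Finset (Fin m))) : Set (Fin m → ℝ) :=
  {x | ∃ σ : Equiv.Perm (Fin m), Compatible m L σ ∧ x = permVertex m σ}

lemma face_subset_perm (L : List (Finset (Fin m))) : permFace m L ⊆ permutohedron m :=
  convexHull_mono (by rintro x ⟨σ, _, rfl⟩; exact ⟨σ, rfl⟩)

lemma gS_comb (S : Finset (Fin m)) (a b : ℝ) (x y : Fin m → ℝ) :
    gS S (a • x + b • y) = a * gS S x + b * gS S y := by
  rw [gS_add, gS_smul, gS_smul]

lemma convex_H : Convex ℝ {x : Fin m → ℝ | inH x} := by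
  intro x hx y hy a b ha hb hab
  constructor
  · intro S
    rw [gS_comb]
    have h1 := hx.1 S
    have h2 := hy.1 S
    have hta : a * tR S.card + b * tR S.card = tR S.card := by linear_combination (tR S.card) * hab
    nlinarith [mul_nonneg ha (sub_nonneg.mpr h1), mul_nonneg hb (sub_nonneg.mpr h2)]
  · have h1 := hx.2
    have h2 := hy.2
    unfold Tight at *
    rw [gS_comb, h1, h2]
    linear_combination (tR (Finset.univ : Finset (Fin m)).card) * hab

lemma vertex_inH (σ : Equiv.Perm (Fin m)) : inH (permVertex m σ) := by
  refine ⟨fun S => vertex_ge S σ, ?_⟩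
  rw [vertex_tight_iff]
  intro i
  simp [Finset.card_univ, (σ i).isLt]

lemma perm_subset_H : permutohedron m ⊆ {x : Fin m → ℝ | inH x} := by
  apply convexHull_min _ convex_H
  rintro x ⟨σ, rfl⟩
  exact vertex_inH σ

lemma face_tight {L : List (Finset (Fin m))} (hOP : IsOrderedPartition m L)
    {x : Fin m → ℝ} (hx : x ∈ permFace m L) (j : ℕ) : Tight x (Pref L j) := by
  have : x ∈ {y : Fin m → ℝ | gS (Pref L j) y = tR (partialCard m L j)} := by
    refine convexHull_min ?_ ?_ hx
    · rintro y ⟨σ, hσ, rfl⟩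
      have : Tight (permVertex m σ) (Pref L j) := by
        rw [vertex_tight_iff]
        intro i
        rw [card_Pref hOP.2.1]
        exact compat_pref hσ j i
      unfold Tight at this
      rw [card_Pref hOP.2.1] at this
      exact this
    · intro u hu v hv a b ha hb hab
      simp only [Set.mem_setOf_eq] at *
      rw [gS_comb, hu, hv]
      linear_combination (tR (partialCard m L j)) * hab
  unfold Tight
  rw [card_Pref hOP.2.1]
  exact this

lemma tight_chain {x : Fin m → ℝ} (hx : inH x) {S T : Finset (Fin m)}
    (hS : Tight x S) (hT : Tight x T) : S ⊆ T ∨ T ⊆ S := by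
  by_contra hcon
  push_neg at hcon
  have hST : S ∩ T ⊂ S := Finset.ssubset_iff_subset_ne.mpr ⟨Finset.inter_subset_left,
    fun h => hcon.1 (by rw [← h]; exact Finset.inter_subset_right)⟩
  have hTS : S ∩ T ⊂ T := Finset.ssubset_iff_subset_ne.mpr ⟨Finset.inter_subset_right,
    fun h => hcon.2 (by rw [← h]; exact Finset.inter_subset_left)⟩
  have hc1 : (S ∩ T).card < S.card := Finset.card_lt_card hST
  have hc2 : (S ∩ T).card < T.card := Finset.card_lt_card hTS
  have hcard : (S ∪ T).card + (S ∩ T).card = S.card + T.card :=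
    Finset.card_union_add_card_inter S T
  have hadd : gS (S ∪ T) x + gS (S ∩ T) x = gS S x + gS T x := by
    unfold gS; rw [Finset.sum_union_inter]
  have h1 := hx.1 (S ∪ T)
  have h2 := hx.1 (S ∩ T)
  have hsup := tN_supermod hc1 hc2 hcard
  unfold Tight at hS hT
  unfold tR at *
  have hsupR : (tN S.card : ℝ) + tN T.card < tN (S ∪ T).card + tN (S ∩ T).card := by
    exact_mod_cast hsup
  linarith

lemma support_tight {ι : Type*} (s : Finset ι) (w f : ι → ℝ) (c : ℝ)
    (hw : ∀ i ∈ s, 0 ≤ w i) (hf : ∀ i ∈ s, c ≤ f i) (hsum : ∑ i ∈ s, w i = 1)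
    (h : ∑ i ∈ s, w i * f i = c) : ∀ i ∈ s, w i ≠ 0 → f i = c := by
  have h0 : ∑ i ∈ s, w i * (f i - c) = 0 := by
    have : ∑ i ∈ s, w i * (f i - c) = (∑ i ∈ s, w i * f i) - (∑ i ∈ s, w i) * c := by
      rw [Finset.sum_mul, ← Finset.sum_sub_distrib]
      congr 1
      ext i
      ring
    rw [this, h, hsum]
    ring
  have hz := (Finset.sum_eq_zero_iff_of_nonneg
    (fun i hi => mul_nonneg (hw i hi) (by linarith [hf i hi]))).mp h0
  intro i hi hwi
  have := hz i hi
  rcases mul_eq_zero.mp this with h' | h'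
  · exact absurd h' hwi
  · linarith [hf i hi]

lemma key_centerMass {w : (Fin m → ℝ) → ℝ} (hw1 : ∑ y ∈ VF m, w y = 1) (S : Finset (Fin m)) :
    gS S ((VF m).centerMass w id) = ∑ y ∈ VF m, w y * gS S y := by
  rw [Finset.centerMass_eq_of_sum_1 _ _ hw1]
  unfold gS
  simp only [id_eq, Finset.sum_apply, Pi.smul_apply, smul_eq_mul]
  rw [Finset.sum_comm]
  simp [Finset.mul_sum]

lemma mem_face_of_tight {L : List (Finset (Fin m))} (hOP : IsOrderedPartition m L)
    {x : Fin m → ℝ} (hx : x ∈ permutohedron m)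
    (ht : ∀ j, j ≤ L.length → Tight x (Pref L j)) : x ∈ permFace m L := by
  classical
  rw [perm_hull, Finset.convexHull_eq] at hx
  obtain ⟨w, hw0, hw1, hcm⟩ := hx
  have key : ∀ S, gS S x = ∑ y ∈ VF m, w y * gS S y := by
    intro S
    rw [← hcm, key_centerMass hw1]
  have hsupp : ∀ y ∈ VF m, w y ≠ 0 → y ∈ CS m L := by
    intro y hy hwy
    obtain ⟨σ, rfl⟩ := (mem_VF y).mp hy
    refine ⟨σ, ?_, rfl⟩
    apply compat_of_pref hOP
    intro j hj i
    have htight : Tight (permVertex m σ) (Pref L j) := by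
      have hsup := support_tight (VF m) w (gS (Pref L j)) (tR (Pref L j).card) hw0
        (fun z hz => by
          obtain ⟨τ, rfl⟩ := (mem_VF z).mp hz
          exact vertex_ge _ τ) hw1
        (by rw [← key]; exact ht j hj)
      exact hsup _ hy hwy
    rw [vertex_tight_iff] at htight
    have := htight i
    rwa [card_Pref hOP.2.1] at this
  have hxcm : ((VF m).filter (fun y => w y ≠ 0)).centerMass w id = x := by
    rw [Finset.centerMass_filter_ne_zero, hcm]
  rw [permFace, ← hxcm]
  refine Finset.centerMass_mem_convexHull _ (fun i hi => hw0 i (Finset.filter_subset _ _ hi)) ?_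
    (fun y hy => ?_)
  · rw [Finset.sum_filter_ne_zero, hw1]; exact one_pos
  · exact hsupp y (Finset.filter_subset _ _ hy) (Finset.mem_filter.mp hy).2

open scoped Classical in
noncomputable def tightSets (x : Fin m → ℝ) : Finset (Finset (Fin m)) :=
  Finset.univ.filter (fun S => Tight x S)

lemma mem_tightSets {x : Fin m → ℝ} {S : Finset (Fin m)} :
    S ∈ tightSets x ↔ Tight x S := by simp [tightSets]

lemma empty_mem_tightSets (x : Fin m → ℝ) : (∅ : Finset (Fin m)) ∈ tightSets x :=
  mem_tightSets.mpr (tight_empty x)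

lemma univ_mem_tightSets {x : Fin m → ℝ} (hx : inH x) :
    (Finset.univ : Finset (Fin m)) ∈ tightSets x := mem_tightSets.mpr hx.2

open scoped Classical in
noncomputable def pick (x : Fin m → ℝ) (c : ℕ) : Finset (Fin m) :=
  ((tightSets x).filter (fun S => S.card = c)).toList.head!

lemma pick_spec {x : Fin m → ℝ} {c : ℕ} (h : c ∈ (tightSets x).image Finset.card) :
    pick x c ∈ tightSets x ∧ (pick x c).card = c := by
  classical
  obtain ⟨S, hS, rfl⟩ := Finset.mem_image.mp h
  have hne : ((tightSets x).filter (fun T => T.card = S.card)).Nonempty := ⟨S, by simp [hS]⟩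
  have hmem : pick x S.card ∈ (tightSets x).filter (fun T => T.card = S.card) := by
    rw [← Finset.mem_toList]
    exact List.head!_mem_self hne.toList_ne_nil
  have := Finset.mem_filter.mp hmem
  exact ⟨this.1, this.2⟩

lemma pick_eq {x : Fin m → ℝ} (hx : inH x) {S : Finset (Fin m)} (hS : Tight x S) :
    pick x S.card = S := by
  have h : S.card ∈ (tightSets x).image Finset.card :=
    Finset.mem_image_of_mem _ (mem_tightSets.mpr hS)
  obtain ⟨hmem, hcard⟩ := pick_spec h
  have hT := mem_tightSets.mp hmem
  rcases tight_chain hx hT hS with h' | h'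
  · exact Finset.eq_of_subset_of_card_le h' (le_of_eq hcard.symm)
  · exact (Finset.eq_of_subset_of_card_le h' (le_of_eq hcard)).symm

noncomputable def cardsL (x : Fin m → ℝ) : List ℕ :=
  ((tightSets x).image Finset.card).sort (· ≤ ·)

noncomputable def Slist (x : Fin m → ℝ) : List (Finset (Fin m)) := (cardsL x).map (pick x)

noncomputable def LX (x : Fin m → ℝ) : List (Finset (Fin m)) :=
  ((Slist x).zip (Slist x).tail).map (fun p => p.2 \ p.1)

lemma length_Slist (x : Fin m → ℝ) : (Slist x).length = (cardsL x).length := by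
  simp [Slist]

lemma cardsL_ne_nil (x : Fin m → ℝ) : cardsL x ≠ [] := by
  have : (0 : ℕ) ∈ cardsL x := by
    rw [cardsL, Finset.mem_sort]
    exact Finset.mem_image.mpr ⟨∅, empty_mem_tightSets x, by simp⟩
  intro h
  rw [h] at this
  simp at this

lemma length_LX (x : Fin m → ℝ) : (LX x).length = (cardsL x).length - 1 := by
  have h := length_Slist x
  simp only [LX, List.length_map, List.length_zip, List.length_tail, h]
  omega

lemma Slist_getElem (x : Fin m → ℝ) (k : ℕ) (hk : k < (Slist x).length) :
    (Slist x)[k]'hk = pick x ((cardsL x)[k]'(by rwa [← length_Slist x])) := by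
  simp [Slist]

lemma LX_getElem (x : Fin m → ℝ) (j : ℕ) (hj : j < (LX x).length) :
    (LX x)[j]'hj =
      ((Slist x)[j + 1]'(by have := length_LX x; have := length_Slist x; omega)) \
      ((Slist x)[j]'(by have := length_LX x; have := length_Slist x; omega)) := by
  have hj' : j < ((Slist x).zip (Slist x).tail).length := by
    simpa [LX] using hj
  simp only [LX, List.getElem_map, List.getElem_zip, List.getElem_tail]

lemma cardsL_strictMono (x : Fin m → ℝ) {k k' : ℕ} (h : k < k') (hk' : k' < (cardsL x).length) :
    (cardsL x)[k]'(by omega) < (cardsL x)[k']'hk' := by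
  have hs : List.Pairwise (· < ·) (cardsL x) := (Finset.sortedLT_sort _).pairwise
  exact List.pairwise_iff_getElem.mp hs k k' (by omega) hk' h

lemma cardsL_mem_image (x : Fin m → ℝ) {k : ℕ} (hk : k < (cardsL x).length) :
    (cardsL x)[k]'hk ∈ (tightSets x).image Finset.card := by
  rw [← Finset.mem_sort (α := ℕ) (· ≤ ·)]
  exact List.getElem_mem _

lemma Slist_tight (x : Fin m → ℝ) {k : ℕ} (hk : k < (Slist x).length) :
    Tight x ((Slist x)[k]'hk) ∧ ((Slist x)[k]'hk).card = (cardsL x)[k]'(by rwa [← length_Slist x]) := by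
  rw [Slist_getElem]
  have := pick_spec (cardsL_mem_image x (k := k) (by rwa [← length_Slist x]))
  exact ⟨mem_tightSets.mp this.1, this.2⟩

lemma Slist_ssubset {x : Fin m → ℝ} (hx : inH x) {k k' : ℕ} (h : k < k')
    (hk' : k' < (Slist x).length) :
    (Slist x)[k]'(by omega) ⊂ (Slist x)[k']'hk' := by
  have h1 := Slist_tight x (k := k) (by omega)
  have h2 := Slist_tight x (k := k') hk'
  have hcard : ((Slist x)[k]'(by omega)).card < ((Slist x)[k']'hk').card := by
    rw [h1.2, h2.2]
    exact cardsL_strictMono x h (by rwa [← length_Slist x])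
  rcases tight_chain hx h1.1 h2.1 with h' | h'
  · exact Finset.ssubset_iff_subset_ne.mpr ⟨h', fun he => by rw [he] at hcard; omega⟩
  · have := Finset.card_le_card h'
    omega

lemma Slist_zero {x : Fin m → ℝ} (hx : inH x) (h0 : 0 < (Slist x).length) :
    (Slist x)[0]'h0 = ∅ := by
  have h1 := Slist_tight x h0
  have hc0 : (cardsL x)[0]'(by rwa [← length_Slist x]) = 0 := by
    have hmem : (0 : ℕ) ∈ cardsL x := by
      rw [cardsL, Finset.mem_sort]
      exact Finset.mem_image.mpr ⟨∅, empty_mem_tightSets x, by simp⟩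
    obtain ⟨k, hk, hke⟩ := List.mem_iff_getElem.mp hmem
    rcases Nat.eq_zero_or_pos k with rfl | hkpos
    · exact hke
    · have := cardsL_strictMono x hkpos hk
      omega
  have := h1.2
  rw [hc0] at this
  exact Finset.card_eq_zero.mp this

lemma cardsL_le_m (x : Fin m → ℝ) {k : ℕ} (hk : k < (cardsL x).length) :
    (cardsL x)[k]'hk ≤ m := by
  obtain ⟨S, _, hS⟩ := Finset.mem_image.mp (cardsL_mem_image x hk)
  rw [← hS]
  simpa using Finset.card_le_card (S.subset_univ)

lemma Slist_last {x : Fin m → ℝ} (hx : inH x)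
    (h : (Slist x).length - 1 < (Slist x).length) :
    (Slist x)[(Slist x).length - 1]'h = Finset.univ := by
  have h1 := Slist_tight x h
  have hlen := length_Slist x
  have hcm : (cardsL x)[(Slist x).length - 1]'(by omega) = m := by
    have hmem : (m : ℕ) ∈ cardsL x := by
      rw [cardsL, Finset.mem_sort]
      exact Finset.mem_image.mpr ⟨Finset.univ, univ_mem_tightSets hx, by simp⟩
    obtain ⟨k, hk, hke⟩ := List.mem_iff_getElem.mp hmem
    have hub := cardsL_le_m x (k := (Slist x).length - 1) (by omega)
    rcases Nat.lt_or_ge k ((Slist x).length - 1) with hlt | hge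
    · have hstrict := cardsL_strictMono x hlt (by omega)
      omega
    · have hke' : k = (Slist x).length - 1 := by omega
      subst hke'
      exact hke
  have h2 := h1.2
  rw [hcm] at h2
  exact (Finset.card_eq_iff_eq_univ _).mp (by simpa using h2)

lemma Slist_pos (x : Fin m → ℝ) : 0 < (Slist x).length := by
  rw [length_Slist]
  have : (cardsL x).length ≠ 0 := by simpa using cardsL_ne_nil x
  omega

lemma Slist_last' {x : Fin m → ℝ} (hx : inH x) {j : ℕ} (hj : j < (Slist x).length)
    (hjl : j = (Slist x).length - 1) : (Slist x)[j]'hj = Finset.univ := by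
  subst hjl; exact Slist_last hx hj

lemma Pref_LX {x : Fin m → ℝ} (hx : inH x) (j : ℕ) (hj : j ≤ (LX x).length) :
    Pref (LX x) j = (Slist x)[j]'(by
      have h1 := length_LX x; have h2 := length_Slist x; have h3 := Slist_pos x; omega) := by
  induction j with
  | zero => rw [Pref_zero]; exact (Slist_zero hx (Slist_pos x)).symm
  | succ n ih =>
    have h1 := length_LX x; have h2 := length_Slist x; have h3 := Slist_pos x
    have hn : n < (LX x).length := by omega
    rw [Pref_succ _ n hn, ih (by omega)]
    rw [List.get_eq_getElem, LX_getElem x n hn]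
    exact Finset.union_sdiff_of_subset (Slist_ssubset hx (Nat.lt_succ_self n) (by omega)).subset

lemma LX_OP {x : Fin m → ℝ} (hx : inH x) : IsOrderedPartition m (LX x) := by
  have h1 := length_LX x; have h2 := length_Slist x; have h3 := Slist_pos x
  refine ⟨?_, ?_, ?_⟩
  · intro U hU
    obtain ⟨j, hj, rfl⟩ := List.mem_iff_getElem.mp hU
    rw [LX_getElem x j hj, Finset.sdiff_nonempty]
    exact (Slist_ssubset hx (Nat.lt_succ_self j) (by omega)).not_subset
  · rw [List.pairwise_iff_getElem]
    intro a b ha hb hab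
    rw [LX_getElem x a ha, LX_getElem x b hb, Finset.disjoint_left]
    intro i hia hib
    have hsub : ((Slist x)[a + 1]'(by omega)) ⊆ ((Slist x)[b]'(by omega)) := by
      rcases Nat.lt_or_ge (a + 1) b with h | h
      · exact (Slist_ssubset hx h (by omega)).subset
      · have hab' : a + 1 = b := by omega
        subst hab'
        exact fun z hz => hz
    exact (Finset.mem_sdiff.mp hib).2 (hsub (Finset.mem_sdiff.mp hia).1)
  · rw [← Pref_length, Pref_LX hx _ le_rfl]
    exact Slist_last' hx _ (by omega)

lemma LX_tight {x : Fin m → ℝ} (hx : inH x) (j : ℕ) (hj : j ≤ (LX x).length) :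
    Tight x (Pref (LX x) j) := by
  rw [Pref_LX hx j hj]
  exact (Slist_tight x _).1

lemma LX_exact {x : Fin m → ℝ} (hx : inH x) {S : Finset (Fin m)} (hS : Tight x S) :
    ∃ j ≤ (LX x).length, S = Pref (LX x) j := by
  have h1 := length_LX x; have h2 := length_Slist x; have h3 := Slist_pos x
  have hcmem : S.card ∈ cardsL x := by
    rw [cardsL, Finset.mem_sort]
    exact Finset.mem_image_of_mem _ (mem_tightSets.mpr hS)
  obtain ⟨k, hk, hke⟩ := List.mem_iff_getElem.mp hcmem
  refine ⟨k, by omega, ?_⟩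
  rw [Pref_LX hx k (by omega)]
  have hS' : (Slist x)[k]'(by omega) = pick x ((cardsL x)[k]'hk) := Slist_getElem x k (by omega)
  rw [hS', hke]
  exact (pick_eq hx hS).symm

lemma isClosed_H : IsClosed {x : Fin m → ℝ | inH x} := by
  have he : {x : Fin m → ℝ | inH x} =
      (⋂ S : Finset (Fin m), {x | tR S.card ≤ gS S x}) ∩
        {x | gS Finset.univ x = tR (Finset.univ : Finset (Fin m)).card} := by
    ext x
    simp only [Set.mem_setOf_eq, Set.mem_inter_iff, Set.mem_iInter, inH, Tight]
  rw [he]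
  exact IsClosed.inter (isClosed_iInter fun S => isClosed_le continuous_const (gS_continuous S))
    (isClosed_eq (gS_continuous _) continuous_const)

lemma H_subset_Icc : {x : Fin m → ℝ | inH x} ⊆
    Set.pi Set.univ (fun _ : Fin m => Set.Icc (1 : ℝ) m) := by
  intro x hx i _
  have hm : 1 ≤ m := i.pos
  have hx1 : gS {i} x = x i := by simp [gS]
  constructor
  · have := hx.1 {i}
    rw [hx1] at this
    simpa [tR, tN] using this
  · have h1 := hx.1 (Finset.univ.erase i)
    have h2 := hx.2
    have hsplit : gS Finset.univ x = x i + gS (Finset.univ.erase i) x := by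
      unfold gS
      rw [← Finset.add_sum_erase _ _ (Finset.mem_univ i)]
    have hcard : (Finset.univ.erase i).card = m - 1 := by
      rw [Finset.card_erase_of_mem (Finset.mem_univ i)]
      simp
    have htm : tR ((Finset.univ : Finset (Fin m)).card) = tR (m - 1) + m := by
      have hnat : tN m = tN (m - 1) + m := by
        obtain ⟨n, hn⟩ : ∃ n, m = n + 1 := ⟨m - 1, by omega⟩
        subst hn
        rw [tN_succ]
        simp
      unfold tR
      rw [Finset.card_univ, Fintype.card_fin]
      exact_mod_cast hnat
    unfold Tight at h2
    rw [hcard] at h1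
    rw [hsplit, htm] at h2
    linarith

lemma isCompact_H : IsCompact {x : Fin m → ℝ | inH x} :=
  IsCompact.of_isClosed_subset (isCompact_univ_pi fun _ => isCompact_Icc) isClosed_H H_subset_Icc

lemma gS_indicator (S : Finset (Fin m)) (i i' : Fin m) :
    gS S (fun k => (if k = i then (1 : ℝ) else 0) - if k = i' then 1 else 0) =
      (if i ∈ S then (1 : ℝ) else 0) - if i' ∈ S then 1 else 0 := by
  unfold gS
  rw [Finset.sum_sub_distrib]
  congr 1 <;> simp [Finset.sum_ite_eq']

lemma pc_LX_singleton {y : Fin m → ℝ}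
    (hsing : ∀ j (hj : j < (LX y).length), ((LX y)[j]'hj).card = 1) :
    ∀ j, j ≤ (LX y).length → partialCard m (LX y) j = j := by
  intro j
  induction j with
  | zero => intro _; rfl
  | succ n ih =>
    intro hn
    rw [pc_succ _ n (by omega), ih (by omega)]
    rw [List.get_eq_getElem, hsing n (by omega)]

set_option maxHeartbeats 1000000 in
lemma extreme_vertex {y : Fin m → ℝ}
    (hy : y ∈ Set.extremePoints ℝ {x : Fin m → ℝ | inH x}) :
    ∃ σ : Equiv.Perm (Fin m), y = permVertex m σ := by
  classical
  have hyH : inH y := hy.1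
  have hOP := LX_OP hyH
  -- Step 1: every part of LX y is a singleton
  have hsing : ∀ j (hj : j < (LX y).length), ((LX y)[j]'hj).card = 1 := by
    intro j hj
    by_contra hcard
    have hne : ((LX y)[j]'hj).Nonempty := hOP.1 _ (List.getElem_mem hj)
    have h2 : 1 < ((LX y)[j]'hj).card := by
      have := Finset.card_pos.mpr hne
      omega
    obtain ⟨i, hi, i', hi', hii'⟩ := Finset.one_lt_card.mp h2
    set d : Fin m → ℝ := fun k => (if k = i then (1 : ℝ) else 0) - if k = i' then 1 else 0 with hd
    have hdi : d i = 1 := by simp [hd, hii']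
    have htight0 : ∀ S : Finset (Fin m), Tight y S → gS S d = 0 := by
      intro S hS
      obtain ⟨k, hk, rfl⟩ := LX_exact hyH hS
      rw [hd, gS_indicator]
      rcases Nat.lt_or_ge k (j + 1) with hkj | hkj
      · -- k ≤ j : Pref k ⊆ Pref j, disjoint from part j
        have hsub : Pref (LX y) k ⊆ Pref (LX y) j := Pref_mono _ (by omega)
        have hdisj := disj_Pref_get hOP.2.1 hj
        have hni : i ∉ Pref (LX y) k := fun hc =>
          (Finset.disjoint_left.mp hdisj) (hsub hc) (by simpa [List.get_eq_getElem] using hi)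
        have hni' : i' ∉ Pref (LX y) k := fun hc =>
          (Finset.disjoint_left.mp hdisj) (hsub hc) (by simpa [List.get_eq_getElem] using hi')
        simp [hni, hni']
      · -- k ≥ j+1 : part j ⊆ Pref (j+1) ⊆ Pref k
        have hsub : Pref (LX y) (j + 1) ⊆ Pref (LX y) k := Pref_mono _ hkj
        have hmemP : ∀ z ∈ (LX y)[j]'hj, z ∈ Pref (LX y) (j + 1) := by
          intro z hz
          rw [Pref_succ _ j hj]
          exact Finset.mem_union_right _ (by simpa [List.get_eq_getElem] using hz)
        have h1 : i ∈ Pref (LX y) k := hsub (hmemP i hi)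
        have h1' : i' ∈ Pref (LX y) k := hsub (hmemP i' hi')
        simp [h1, h1']
    -- the perturbation budget
    set NT : Finset (Finset (Fin m)) := Finset.univ.filter (fun S => ¬ Tight y S) with hNT
    have hfpos : ∀ S ∈ NT, 0 < gS S y - tR S.card := by
      intro S hS
      have h1 := hyH.1 S
      have h2 : ¬ Tight y S := (Finset.mem_filter.mp hS).2
      unfold Tight at h2
      rcases lt_or_eq_of_le h1 with h | h
      · linarith
      · exact absurd h.symm h2
    set ε : ℝ := if h : NT.Nonempty then (NT.inf' h (fun S => gS S y - tR S.card)) else 1 with hε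
    have hεpos : 0 < ε := by
      rw [hε]
      split_ifs with h
      · exact (Finset.lt_inf'_iff h).mpr (fun S hS => hfpos S hS)
      · exact one_pos
    have hεle : ∀ S ∈ NT, ε ≤ gS S y - tR S.card := by
      intro S hS
      rw [hε]
      rw [dif_pos ⟨S, hS⟩]
      exact Finset.inf'_le _ hS
    have hdbound : ∀ S : Finset (Fin m), |gS S d| ≤ 1 := by
      intro S
      rw [hd, gS_indicator]
      split_ifs <;> norm_num
    -- the two perturbed points
    have hinH : ∀ s : ℝ, |s| ≤ ε → inH (y + s • d) := by
      intro s hs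
      constructor
      · intro S
        rw [gS_add, gS_smul]
        by_cases hT : Tight y S
        · rw [htight0 S hT]
          unfold Tight at hT
          rw [hT]
          simp
        · have h1 := hεle S (Finset.mem_filter.mpr ⟨Finset.mem_univ _, hT⟩)
          have h2 := hdbound S
          have habs : |s * gS S d| ≤ ε := by
            rw [abs_mul]
            calc |s| * |gS S d| ≤ ε * 1 :=
              mul_le_mul hs (hdbound S) (abs_nonneg _) (le_of_lt hεpos)
            _ = ε := mul_one ε
          have := abs_le.mp habs
          linarith
      · unfold Tight
        rw [gS_add, gS_smul, htight0 _ hyH.2]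
        have := hyH.2
        unfold Tight at this
        rw [this]
        simp
    have hy1 := hinH (-ε) (by rw [abs_neg, abs_of_pos hεpos])
    have hy2 := hinH ε (by rw [abs_of_pos hεpos])
    have hseg : y ∈ openSegment ℝ (y + (-ε) • d) (y + ε • d) := by
      refine ⟨1/2, 1/2, by norm_num, by norm_num, by norm_num, ?_⟩
      funext k
      simp only [Pi.add_apply, Pi.smul_apply, smul_eq_mul, Pi.sub_apply]
      ring
    have h0 := hy.2 hy1 hy2 hseg
    have : (-ε) * d i = 0 := by
      have := congrFun h0 i
      simp only [Pi.add_apply, Pi.smul_apply, smul_eq_mul] at this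
      linarith
    rw [hdi] at this
    nlinarith
  -- Step 2: lengths
  have h1 := length_LX y; have h2 := length_Slist y; have h3 := Slist_pos y
  set p := (LX y).length with hp
  have hpcp : partialCard m (LX y) p = p := pc_LX_singleton hsing p le_rfl
  have hpm : p = m := by
    have hcu : (Pref (LX y) p).card = partialCard m (LX y) p := card_Pref hOP.2.1 p
    rw [Pref_univ hOP] at hcu
    simp only [Finset.card_univ, Fintype.card_fin] at hcu
    omega
  -- Step 3: build the permutation
  have hex : ∀ i : Fin m, ∃ j, ∃ hj : j < (LX y).length, i ∈ (LX y)[j]'hj := by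
    intro i
    have : i ∈ (LX y).foldr (· ∪ ·) ∅ := by rw [hOP.2.2]; exact Finset.mem_univ _
    rw [mem_foldr_union] at this
    obtain ⟨U, hU, hiU⟩ := this
    obtain ⟨j, hj, rfl⟩ := List.mem_iff_getElem.mp hU
    exact ⟨j, hj, hiU⟩
  choose jf hjf hjmem using hex
  have hval : ∀ i : Fin m, jf i < m := fun i => by have := hjf i; omega
  set f : Fin m → Fin m := fun i => ⟨jf i, hval i⟩ with hf
  have hfinj : Function.Injective f := by
    intro a b hab
    have hjeq : jf a = jf b := by
      have := congrArg Fin.val hab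
      simpa [hf] using this
    have hcard1 := hsing (jf a) (hjf a)
    have hmb' : b ∈ (LX y)[jf a]'(hjf a) := by
      have hgb : ∀ (k : ℕ) (hk : k < (LX y).length), k = jf b →
          b ∈ (LX y)[k]'hk := by
        intro k hk hkeq
        subst hkeq
        exact hjmem b
      exact hgb _ (hjf a) hjeq
    exact Finset.card_le_one.mp (le_of_eq hcard1) a (hjmem a) b hmb'
  have hfbij : Function.Bijective f := Finite.injective_iff_bijective.mp hfinj
  refine ⟨Equiv.ofBijective f hfbij, ?_⟩
  funext i
  set j := jf i with hj
  have hjlt : j < (LX y).length := hjf i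
  have hmem : i ∈ (LX y)[j]'hjlt := hjmem i
  -- part j is {i}
  have hpart : (LX y)[j]'hjlt = {i} := by
    obtain ⟨a, ha⟩ := Finset.card_eq_one.mp (hsing j hjlt)
    rw [ha] at hmem ⊢
    rw [Finset.mem_singleton] at hmem
    rw [hmem]
  -- y i = j + 1
  have hti : Tight y (Pref (LX y) j) := LX_tight hyH j (by omega)
  have hti1 : Tight y (Pref (LX y) (j + 1)) := LX_tight hyH (j + 1) (by omega)
  have hsplit : gS (Pref (LX y) (j + 1)) y = gS (Pref (LX y) j) y + y i := by
    unfold gS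
    rw [Pref_succ _ j hjlt, Finset.sum_union (disj_Pref_get hOP.2.1 hjlt)]
    congr 1
    rw [List.get_eq_getElem, hpart, Finset.sum_singleton]
  have hpcj : partialCard m (LX y) j = j := pc_LX_singleton hsing j (by omega)
  have hpcj1 : partialCard m (LX y) (j + 1) = j + 1 := pc_LX_singleton hsing (j + 1) (by omega)
  unfold Tight at hti hti1
  rw [card_Pref hOP.2.1, hpcj] at hti
  rw [card_Pref hOP.2.1, hpcj1] at hti1
  have hyi : y i = (j : ℝ) + 1 := by
    have htj1 : tR (j + 1) = tR j + (j + 1 : ℝ) := by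
      unfold tR
      rw [tN_succ]
      push_cast
      ring
    rw [hsplit, hti] at hti1
    rw [htj1] at hti1
    linarith
  rw [hyi]
  unfold permVertex
  simp [Equiv.ofBijective, hf]
  exact hj

lemma rado : {x : Fin m → ℝ | inH x} ⊆ permutohedron m := by
  have hKM := closure_convexHull_extremePoints (isCompact_H (m := m)) convex_H
  rw [← hKM, perm_hull]
  have hsub : Set.extremePoints ℝ {x : Fin m → ℝ | inH x} ⊆ (VF m : Set (Fin m → ℝ)) := by
    intro y hy
    obtain ⟨σ, rfl⟩ := extreme_vertex hy
    exact (mem_VF _).mpr ⟨σ, rfl⟩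
  calc closure (convexHull ℝ (Set.extremePoints ℝ {x : Fin m → ℝ | inH x}))
      ⊆ closure (convexHull ℝ (VF m : Set (Fin m → ℝ))) :=
        closure_mono (convexHull_mono hsub)
    _ = convexHull ℝ (VF m : Set (Fin m → ℝ)) :=
        IsClosed.closure_eq ((VF m).finite_toSet.isClosed_convexHull ℝ)

lemma bounds_unique {L : List (Finset (Fin m))} {j k : ℕ} (_ : j < L.length) (_ : k < L.length)
    {v : ℕ} (hvj : partialCard m L j ≤ v ∧ v < partialCard m L (j + 1))
    (hvk : partialCard m L k ≤ v ∧ v < partialCard m L (k + 1)) : j = k := by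
  by_contra h
  rcases Nat.lt_or_ge j k with h' | h'
  · have := pc_mono L (show j + 1 ≤ k by omega)
    omega
  · have := pc_mono L (show k + 1 ≤ j by omega)
    omega

lemma compat_swap {L : List (Finset (Fin m))} {σ : Equiv.Perm (Fin m)}
    (hσ : Compatible m L σ) {a b : Fin m} {j : ℕ} (hj : j < L.length)
    (ha : partialCard m L j ≤ (σ a : ℕ) ∧ (σ a : ℕ) < partialCard m L (j + 1))
    (hb : partialCard m L j ≤ (σ b : ℕ) ∧ (σ b : ℕ) < partialCard m L (j + 1)) :
    Compatible m L (σ.trans (Equiv.swap (σ a) (σ b))) := by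
  intro k i
  have hk := k.isLt
  simp only [Equiv.trans_apply]
  rcases eq_or_ne i a with rfl | hia
  · rw [Equiv.swap_apply_left]
    have h1 := hσ k i
    constructor
    · intro hmem
      have hbounds := h1.mp hmem
      have hkj : (k : ℕ) = j := bounds_unique hk hj hbounds ha
      rw [hkj]
      exact hb
    · intro hbounds
      have hkj : (k : ℕ) = j := bounds_unique hk hj hbounds hb
      apply h1.mpr
      rw [hkj]
      exact ha
  · rcases eq_or_ne i b with rfl | hib
    · rw [Equiv.swap_apply_right]
      have h1 := hσ k i
      constructor
      · intro hmem
        have hbounds := h1.mp hmem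
        have hkj : (k : ℕ) = j := bounds_unique hk hj hbounds hb
        rw [hkj]
        exact ha
      · intro hbounds
        have hkj : (k : ℕ) = j := bounds_unique hk hj hbounds ha
        apply h1.mpr
        rw [hkj]
        exact hb
    · rw [Equiv.swap_apply_of_ne_of_ne (fun hc => hia (σ.injective hc))
        (fun hc => hib (σ.injective hc))]
      exact hσ k i

lemma exists_compat_big {L : List (Finset (Fin m))} (hOP : IsOrderedPartition m L)
    {σ0 : Equiv.Perm (Fin m)} (hσ0 : Compatible m L σ0)
    {S : Finset (Fin m)} (hS : S.Nonempty)
    (hnp : ∀ j, j ≤ L.length → S ≠ Pref L j) :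
    ∃ σ, Compatible m L σ ∧ tR S.card < gS S (permVertex m σ) := by
  classical
  by_contra h
  push_neg at h
  have hall : ∀ σ, Compatible m L σ → ∀ i : Fin m, (i ∈ S ↔ ((σ i : Fin m) : ℕ) < S.card) := by
    intro σ hσ
    have hle := h σ hσ
    have hge := vertex_ge S σ
    exact (vertex_tight_iff S σ).mp (le_antisymm hle hge)
  set c := S.card with hc
  have hcm : c ≤ m := by simpa using Finset.card_le_card S.subset_univ
  have hpclen : partialCard m L L.length = m := by
    have h1 := card_Pref (m := m) hOP.2.1 L.length
    rw [Pref_univ hOP] at h1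
    simpa using h1.symm
  by_cases hex : ∃ j ≤ L.length, partialCard m L j = c
  · obtain ⟨j, hj, hpc⟩ := hex
    apply hnp j hj
    ext i
    rw [compat_pref hσ0 j i, hpc]
    exact hall σ0 hσ0 i
  · push_neg at hex
    have hc0 : 0 < c := Finset.card_pos.mpr hS
    have hcm' : c < m := lt_of_le_of_ne hcm (fun hcc => hex L.length le_rfl (by omega))
    have hPlen : c < partialCard m L L.length := by omega
    have hPex : ∃ k, c < partialCard m L k := ⟨L.length, hPlen⟩
    set k0 := Nat.find hPex with hk0
    have hk0spec : c < partialCard m L k0 := Nat.find_spec hPex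
    have hk0le : k0 ≤ L.length := Nat.find_min' hPex hPlen
    have hk0pos : 1 ≤ k0 := by
      by_contra hcon
      push_neg at hcon
      interval_cases k0
      · rw [pc_zero] at hk0spec; omega
    set j := k0 - 1 with hjdef
    have hj1 : j + 1 = k0 := by omega
    have hjlt : j < L.length := by omega
    have hpcj_le : partialCard m L j ≤ c := by
      have := Nat.find_min hPex (show j < k0 by omega)
      omega
    have hpcj_lt : partialCard m L j < c :=
      lt_of_le_of_ne hpcj_le (fun hcc => hex j (by omega) hcc)
    have hpcj1 : c < partialCard m L (j + 1) := by rw [hj1]; exact hk0spec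
    -- the two swap witnesses
    set a := σ0.symm ⟨c - 1, by omega⟩ with hadef
    set b := σ0.symm ⟨c, hcm'⟩ with hbdef
    have hσa : ((σ0 a : Fin m) : ℕ) = c - 1 := by rw [hadef]; simp
    have hσb : ((σ0 b : Fin m) : ℕ) = c := by rw [hbdef]; simp
    have hba : partialCard m L j ≤ (σ0 a : ℕ) ∧ (σ0 a : ℕ) < partialCard m L (j + 1) := by
      rw [hσa]; omega
    have hbb : partialCard m L j ≤ (σ0 b : ℕ) ∧ (σ0 b : ℕ) < partialCard m L (j + 1) := by
      rw [hσb]; omega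
    have hσ1 := compat_swap hσ0 hjlt hba hbb
    have haS : a ∈ S := by
      rw [hall σ0 hσ0 a, hσa]
      omega
    have hnaS := (hall _ hσ1 a).mp haS
    simp only [Equiv.trans_apply, Equiv.swap_apply_left] at hnaS
    rw [hσb] at hnaS
    omega

lemma extension {s : Set (Fin m → ℝ)} {x : Fin m → ℝ}
    (hx : x ∈ intrinsicInterior ℝ s) {y : Fin m → ℝ} (hy : y ∈ s) :
    ∃ z ∈ s, ∃ a b : ℝ, 0 < a ∧ 0 < b ∧ a + b = 1 ∧ a • y + b • z = x := by
  obtain ⟨p, hp, hpx⟩ := hx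
  have hxs : x ∈ s := intrinsicInterior_subset ⟨p, hp, hpx⟩
  have hxa : x ∈ affineSpan ℝ s := subset_affineSpan ℝ s hxs
  have hya : y ∈ affineSpan ℝ s := subset_affineSpan ℝ s hy
  have hmem : ∀ t : ℝ, x + t • (x - y) ∈ affineSpan ℝ s := by
    intro t
    have := AffineSubspace.smul_vsub_vadd_mem (affineSpan ℝ s) t hxa hya hxa
    simpa [vsub_eq_sub, vadd_eq_add, add_comm] using this
  set γ : ℝ → affineSpan ℝ s := fun t => ⟨x + t • (x - y), hmem t⟩ with hγ
  have hcont : Continuous γ := by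
    apply Continuous.subtype_mk
    fun_prop
  have hγ0 : γ 0 = ⟨x, hxa⟩ := by simp [hγ]
  have hpeq : p = ⟨x, hxa⟩ := Subtype.ext hpx
  have hopen : IsOpen (γ ⁻¹' interior ((Subtype.val) ⁻¹' s : Set (affineSpan ℝ s))) :=
    hcont.isOpen_preimage _ isOpen_interior
  have h0mem : (0 : ℝ) ∈ γ ⁻¹' interior ((Subtype.val) ⁻¹' s : Set (affineSpan ℝ s)) := by
    rw [Set.mem_preimage, hγ0, ← hpeq]
    exact hp
  obtain ⟨δ, hδpos, hδ⟩ := Metric.isOpen_iff.mp hopen 0 h0mem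
  set t := δ / 2 with htdef
  have htpos : 0 < t := by positivity
  have h1t : (1 : ℝ) + t ≠ 0 := by positivity
  have htball : t ∈ Metric.ball (0 : ℝ) δ := by
    rw [Metric.mem_ball, Real.dist_eq, sub_zero, abs_of_pos htpos]
    rw [htdef]
    linarith
  have htmem := hδ htball
  rw [Set.mem_preimage] at htmem
  have hz' : γ t ∈ (Subtype.val ⁻¹' s : Set (affineSpan ℝ s)) := interior_subset htmem
  have hz : x + t • (x - y) ∈ s := hz'
  refine ⟨x + t • (x - y), hz, t / (1 + t), 1 / (1 + t), by positivity, by positivity, ?_, ?_⟩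
  · rw [← add_div, div_eq_one_iff_eq h1t]
    ring
  · funext k
    simp only [Pi.add_apply, Pi.smul_apply, smul_eq_mul, Pi.sub_apply]
    field_simp
    ring

lemma relint_tight_prefix {L : List (Finset (Fin m))} (hOP : IsOrderedPartition m L)
    {x : Fin m → ℝ} (hx : x ∈ intrinsicInterior ℝ (permFace m L))
    {S : Finset (Fin m)} (hS : S.Nonempty) (hT : Tight x S) :
    ∃ j ≤ L.length, S = Pref L j := by
  by_contra h
  push_neg at h
  have hxF : x ∈ permFace m L := intrinsicInterior_subset hx
  have hne : (CS m L).Nonempty := by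
    have h' : (convexHull ℝ (CS m L)).Nonempty := ⟨x, hxF⟩
    exact convexHull_nonempty_iff.mp h'
  obtain ⟨v0, σ0, hσ0, rfl⟩ := hne
  obtain ⟨σ, hσ, hbig⟩ := exists_compat_big hOP hσ0 hS h
  have hvF : permVertex m σ ∈ permFace m L := subset_convexHull ℝ _ ⟨σ, hσ, rfl⟩
  obtain ⟨z, hz, a, b, ha, hb, hab, hcomb⟩ := extension hx hvF
  have hzH : inH z := perm_subset_H (face_subset_perm L hz)
  have h1 := hzH.1 S
  have hcx : gS S x = a * gS S (permVertex m σ) + b * gS S z := by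
    rw [← hcomb, gS_comb]
  unfold Tight at hT
  have hsplit : a * tR S.card + b * tR S.card = tR S.card := by
    linear_combination (tR S.card) * hab
  nlinarith [mul_lt_mul_of_pos_left hbig ha, mul_le_mul_of_nonneg_left h1 (le_of_lt hb)]

lemma gS_sub (S : Finset (Fin m)) (x y : Fin m → ℝ) : gS S (x - y) = gS S x - gS S y := by
  simp [gS, Finset.sum_sub_distrib]

/-- the hyperplane `gS S = c` as an affine subspace -/
noncomputable def affEq (S : Finset (Fin m)) (c : ℝ) : AffineSubspace ℝ (Fin m → ℝ) where
  carrier := {y | gS S y = c}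
  smul_vsub_vadd_mem' := by
    intro t p1 p2 p3 h1 h2 h3
    simp only [Set.mem_setOf_eq] at *
    show gS S (t • (p1 -ᵥ p2) +ᵥ p3) = c
    rw [vadd_eq_add, vsub_eq_sub, gS_add, gS_smul, gS_sub, h1, h2, h3]
    ring

lemma mem_relint {L : List (Finset (Fin m))} (hOP : IsOrderedPartition m L)
    {x : Fin m → ℝ} (hxP : x ∈ permutohedron m)
    (ht : ∀ j, j ≤ L.length → Tight x (Pref L j))
    (hexact : ∀ S : Finset (Fin m), S.Nonempty → Tight x S → ∃ j ≤ L.length, S = Pref L j) :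
    x ∈ intrinsicInterior ℝ (permFace m L) := by
  classical
  have hxF : x ∈ permFace m L := mem_face_of_tight hOP hxP ht
  have hxH : inH x := perm_subset_H hxP
  have hspan : ∀ j, j ≤ L.length → ∀ y : Fin m → ℝ, y ∈ affineSpan ℝ (permFace m L) →
      gS (Pref L j) y = tR (partialCard m L j) := by
    intro j hj
    have hle : affineSpan ℝ (permFace m L) ≤ affEq (Pref L j) (tR (partialCard m L j)) := by
      apply affineSpan_le.mpr
      intro y hy
      have h1 := face_tight hOP hy j
      unfold Tight at h1
      rw [card_Pref hOP.2.1] at h1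
      exact h1
    intro y hy
    exact hle hy
  set NP : Finset (Finset (Fin m)) :=
    Finset.univ.filter (fun S => S.Nonempty ∧ ∀ j ≤ L.length, S ≠ Pref L j) with hNP
  set W : Set (Fin m → ℝ) := ⋂ S ∈ NP, {y | tR S.card < gS S y} with hW
  have hWopen : IsOpen W :=
    isOpen_biInter_finset (fun S _ => isOpen_lt continuous_const (gS_continuous S))
  have hxW : x ∈ W := by
    rw [hW, Set.mem_iInter₂]
    intro S hS
    obtain ⟨hSne, hSnp⟩ := (Finset.mem_filter.mp hS).2
    have hnT : ¬ Tight x S := by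
      intro hT
      obtain ⟨j, hj, hje⟩ := hexact S hSne hT
      exact hSnp j hj hje
    have := hxH.1 S
    unfold Tight at hnT
    exact lt_of_le_of_ne this (fun hc => hnT hc.symm)
  have hsub : ∀ y : Fin m → ℝ, y ∈ W → y ∈ affineSpan ℝ (permFace m L) → y ∈ permFace m L := by
    intro y hyW hyA
    have hyH : inH y := by
      constructor
      · intro S
        rcases S.eq_empty_or_nonempty with rfl | hSne
        · simp [gS, tR, tN]
        · by_cases hpre : ∃ j ≤ L.length, S = Pref L j
          · obtain ⟨j, hj, rfl⟩ := hpre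
            rw [card_Pref hOP.2.1]
            exact le_of_eq (hspan j hj y hyA).symm
          · push_neg at hpre
            have hSNP : S ∈ NP := by
              rw [hNP, Finset.mem_filter]
              exact ⟨Finset.mem_univ _, hSne, hpre⟩
            exact le_of_lt (Set.mem_iInter₂.mp hyW S hSNP)
      · have h1 := hspan L.length le_rfl y hyA
        unfold Tight
        have h2 : Finset.univ = Pref L L.length := (Pref_univ hOP).symm
        rw [h2, card_Pref hOP.2.1]
        exact h1
    have hyP : y ∈ permutohedron m := rado hyH
    apply mem_face_of_tight hOP hyP
    intro j hj
    unfold Tight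
    rw [card_Pref hOP.2.1]
    exact hspan j hj y hyA
  -- conclude
  have hxa : x ∈ affineSpan ℝ (permFace m L) := subset_affineSpan ℝ _ hxF
  refine ⟨⟨x, hxa⟩, ?_, rfl⟩
  have hU : (Subtype.val ⁻¹' W : Set (affineSpan ℝ (permFace m L))) ⊆
      Subtype.val ⁻¹' (permFace m L) := fun q hq => hsub _ hq q.2
  exact interior_maximal hU (continuous_subtype_val.isOpen_preimage _ hWopen) hxW

lemma get_eq_sdiff {L : List (Finset (Fin m))} (hOP : IsOrderedPartition m L)
    {j : ℕ} (hj : j < L.length) :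
    L.get ⟨j, hj⟩ = Pref L (j + 1) \ Pref L j := by
  rw [Pref_succ L j hj, Finset.union_sdiff_cancel_left (disj_Pref_get hOP.2.1 hj)]

end PermCx

open PermCx in
theorem stmt10 (m : ℕ) (hm : 1 ≤ m) (K : Set (Finset (Fin m)))
    (hK : IsSimplicialComplex m K) :
    permutohedron m \
      (⋃ I ∈ {I : Finset (Fin m) | I ∉ K},
        ⋃ L ∈ {L : List (Finset (Fin m)) |
            IsOrderedPartition m L ∧ ∃ j : Fin L.length, L.get j = I},
          intrinsicInterior ℝ (permFace m L)) =
    ⋃ L ∈ {L : List (Finset (Fin m)) |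
        IsOrderedPartition m L ∧ ∀ U ∈ L, U ∈ K}, permFace m L := by
  classical
  apply Set.eq_of_subset_of_subset
  · -- LHS ⊆ RHS
    rintro x ⟨hxP, hxB⟩
    have hxH : inH x := perm_subset_H hxP
    have hOP := LX_OP hxH
    have hxF : x ∈ permFace m (LX x) :=
      mem_face_of_tight hOP hxP (fun j hj => LX_tight hxH j hj)
    by_cases hall : ∀ U ∈ LX x, U ∈ K
    · rw [Set.mem_iUnion₂]
      exact ⟨LX x, ⟨hOP, hall⟩, hxF⟩
    · exfalso
      push_neg at hall
      obtain ⟨U, hUmem, hUK⟩ := hall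
      apply hxB
      have hrel : x ∈ intrinsicInterior ℝ (permFace m (LX x)) :=
        mem_relint hOP hxP (fun j hj => LX_tight hxH j hj)
          (fun S _ hT => LX_exact hxH hT)
      obtain ⟨j, hj, rfl⟩ := List.mem_iff_getElem.mp hUmem
      rw [Set.mem_iUnion₂]
      refine ⟨(LX x)[j], hUK, ?_⟩
      rw [Set.mem_iUnion₂]
      exact ⟨LX x, ⟨hOP, ⟨⟨j, hj⟩, rfl⟩⟩, hrel⟩
  · -- RHS ⊆ LHS
    intro x hx
    rw [Set.mem_iUnion₂] at hx
    obtain ⟨L, ⟨hOP, hKparts⟩, hxF⟩ := hx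
    refine ⟨face_subset_perm L hxF, ?_⟩
    intro hxB
    rw [Set.mem_iUnion₂] at hxB
    obtain ⟨I, hI, hxB⟩ := hxB
    rw [Set.mem_iUnion₂] at hxB
    obtain ⟨L', ⟨hOP', j, hjI⟩, hxR⟩ := hxB
    have hxF' : x ∈ permFace m L' := intrinsicInterior_subset hxR
    have hIdef : I = Pref L' ((j : ℕ) + 1) \ Pref L' (j : ℕ) := by
      rw [← hjI]
      exact get_eq_sdiff hOP' j.isLt
    have hIne : I.Nonempty := by
      rw [← hjI]
      exact hOP'.1 _ (L'.get_mem _)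
    have hPex : ∃ k, Pref L' ((j : ℕ) + 1) ⊆ Pref L k :=
      ⟨L.length, by rw [Pref_univ hOP]; exact Finset.subset_univ _⟩
    set k0 := Nat.find hPex with hk0def
    have hk0spec : Pref L' ((j : ℕ) + 1) ⊆ Pref L k0 := Nat.find_spec hPex
    have hk0le : k0 ≤ L.length :=
      Nat.find_min' hPex (by rw [Pref_univ hOP]; exact Finset.subset_univ _)
    have hk0pos : 1 ≤ k0 := by
      rcases Nat.eq_zero_or_pos k0 with h0 | h
      · exfalso
        obtain ⟨i, hi⟩ := hIne
        have hi1 : i ∈ Pref L' ((j : ℕ) + 1) := by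
          rw [hIdef] at hi
          exact (Finset.mem_sdiff.mp hi).1
        have hmem := hk0spec hi1
        rw [h0, Pref_zero] at hmem
        exact absurd hmem (Finset.notMem_empty i)
      · omega
    have hk1lt : k0 - 1 < L.length := by omega
    have hsub1 : Pref L (k0 - 1) ⊆ Pref L' (j : ℕ) := by
      rcases (Pref L (k0 - 1)).eq_empty_or_nonempty with he | hne
      · rw [he]; exact Finset.empty_subset _
      · have hT : Tight x (Pref L (k0 - 1)) := face_tight hOP hxF (k0 - 1)
        obtain ⟨r, hr, hre⟩ := relint_tight_prefix hOP' hxR hne hT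
        rcases Nat.lt_or_ge r ((j : ℕ) + 1) with hlt | hge
        · rw [hre]; exact Pref_mono _ (by omega)
        · exfalso
          have hcon : Pref L' ((j : ℕ) + 1) ⊆ Pref L (k0 - 1) := by
            rw [hre]; exact Pref_mono _ hge
          exact Nat.find_min hPex (show k0 - 1 < k0 by omega) hcon
    have hpart : I ⊆ L.get ⟨k0 - 1, hk1lt⟩ := by
      rw [get_eq_sdiff hOP hk1lt]
      intro i hi
      rw [Finset.mem_sdiff]
      constructor
      · have hi1 : i ∈ Pref L' ((j : ℕ) + 1) := by
          rw [hIdef] at hi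
          exact (Finset.mem_sdiff.mp hi).1
        have h2 := hk0spec hi1
        rwa [show k0 - 1 + 1 = k0 by omega]
      · intro hc
        have hij := hsub1 hc
        rw [hIdef] at hi
        exact (Finset.mem_sdiff.mp hi).2 hij
    have hUK : L.get ⟨k0 - 1, hk1lt⟩ ∈ K := hKparts _ (L.get_mem _)
    exact hI (hK.1 _ hUK I hpart)
end

section
/- Let (U_1 | ⋯ | U_p) be an ordered partition of [m] and set σ = {i : 1 ≤ i ≤ m−1 and {i, i+1} ⊆ U_j for some j}. Then |σ| ≤ m − p, and equality |σ| = m − p holds if and only if every part U_j is an interval of consecutive integers, i.e., U_j = {a_j, a_j + 1, …, a_j + |U_j| − 1} for some a_j ∈ [m]. -/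
/-- The set `σ = {i : {i, i+1} ⊆ U_j for some j}` (in 0-based form: `i` and `i+1`
lie in the same part, with `i+1 ≤ m-1`). -/
noncomputable def sigmaSet (m : ℕ) (L : List (Finset (Fin m))) : Finset (Fin m) := by
  classical
  exact Finset.univ.filter (fun i : Fin m =>
    ∃ hi : i.val + 1 < m, ∃ j : Fin L.length,
      i ∈ L.get j ∧ (⟨i.val + 1, hi⟩ : Fin m) ∈ L.get j)



open Finset

lemma nat_key (S : Finset ℕ) (hS : S.Nonempty) :
    ((S.filter (fun n => n+1 ∈ S)).card + 1 ≤ S.card) ∧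
    (((S.filter (fun n => n+1 ∈ S)).card + 1 = S.card) ↔
      ∃ a, S = Finset.Ico a (a + S.card)) := by
  classical
  set T := S.filter (fun n => n+1 ∈ S) with hT
  have hmin := S.min'_mem hS
  have himg : T.image (· + 1) ⊆ S.erase (S.min' hS) := by
    intro x hx
    simp only [mem_image] at hx
    obtain ⟨n, hn, rfl⟩ := hx
    rw [hT, mem_filter] at hn
    refine mem_erase.2 ⟨?_, hn.2⟩
    have := S.min'_le n hn.1
    omega
  have hinj : Set.InjOn (· + 1) T := fun a _ b _ h => by simpa using h
  have hcardT : T.card ≤ S.card - 1 := by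
    calc T.card = (T.image (· + 1)).card := (Finset.card_image_of_injOn hinj).symm
    _ ≤ (S.erase (S.min' hS)).card := Finset.card_le_card himg
    _ = S.card - 1 := Finset.card_erase_of_mem hmin
  have hS1 : 1 ≤ S.card := Finset.card_pos.2 hS
  constructor
  · omega
  constructor
  · -- forward
    intro heq
    have hcards : (T.image (· + 1)).card = (S.erase (S.min' hS)).card := by
      rw [Finset.card_image_of_injOn hinj, Finset.card_erase_of_mem hmin]
      omega
    have himgeq : T.image (· + 1) = S.erase (S.min' hS) :=
      Finset.eq_of_subset_of_card_le himg (le_of_eq hcards.symm)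
    -- every x ∈ S, x ≠ min, has x - 1 ∈ S
    have hpred : ∀ x ∈ S, x ≠ S.min' hS → x - 1 ∈ S ∧ 1 ≤ x := by
      intro x hx hxne
      have : x ∈ T.image (· + 1) := himgeq ▸ mem_erase.2 ⟨hxne, hx⟩
      simp only [mem_image] at this
      obtain ⟨n, hn, rfl⟩ := this
      rw [hT, mem_filter] at hn
      simpa using hn.1
    -- downward closure
    have hdown : ∀ x, x ∈ S → Finset.Icc (S.min' hS) x ⊆ S := by
      intro x
      induction x using Nat.strong_induction_on with
      | _ x ih =>
        intro hx y hy
        rw [Finset.mem_Icc] at hy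
        rcases eq_or_lt_of_le hy.2 with rfl | hlt
        · exact hx
        · have hxne : x ≠ S.min' hS := by
            have := S.min'_le x hx
            omega
          obtain ⟨h1, h2⟩ := hpred x hx hxne
          exact ih (x-1) (by omega) h1 (Finset.mem_Icc.2 ⟨hy.1, by omega⟩)
    have hmax := S.max'_mem hS
    set a0 := S.min' hS with ha0
    set b0 := S.max' hS with hb0
    have hSeq : S = Finset.Icc a0 b0 := by
      apply Finset.Subset.antisymm
      · intro x hx
        exact Finset.mem_Icc.2 ⟨S.min'_le x hx, S.le_max' x hx⟩
      · exact hdown _ hmax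
    have hle : a0 ≤ b0 := S.min'_le _ hmax
    refine ⟨a0, ?_⟩
    have hcard : S.card = b0 - a0 + 1 := by
      rw [hSeq, Nat.card_Icc]; omega
    have h2 : a0 + (b0 - a0 + 1) = b0 + 1 := by omega
    rw [hcard, hSeq, h2, Finset.Ico_add_one_right_eq_Icc]
  · -- backward
    rintro ⟨a, ha⟩
    have hc : S.card = (Finset.Ico a (a + S.card)).card := by rw [← ha]
    set c := S.card with hcdef
    have hTeq : T = Finset.Ico a (a + c - 1) := by
      rw [hT, ha]
      ext n
      simp only [mem_filter, Finset.mem_Ico]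
      omega
    rw [hTeq, Nat.card_Ico]
    omega

variable {α : Type*} [DecidableEq α]

lemma mem_foldr_union_s14 (l : List (Finset α)) (a : α) :
    a ∈ l.foldr (· ∪ ·) ∅ ↔ ∃ U ∈ l, a ∈ U := by
  induction l with
  | nil => simp
  | cons U l ih => simp [ih]

lemma disjoint_foldr_union (l : List (Finset α)) (U : Finset α)
    (h : ∀ V ∈ l, Disjoint U V) : Disjoint U (l.foldr (· ∪ ·) ∅) := by
  induction l with
  | nil => simp
  | cons V l ih =>
    simp only [List.foldr_cons, Finset.disjoint_union_right]
    exact ⟨h V (by simp), ih fun W hW => h W (by simp [hW])⟩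

lemma card_foldr_union_s14 (l : List (Finset α)) (h : l.Pairwise Disjoint) :
    (l.foldr (· ∪ ·) ∅).card = (l.map Finset.card).sum := by
  induction l with
  | nil => simp
  | cons U l ih =>
    rw [List.pairwise_cons] at h
    simp only [List.foldr_cons, List.map_cons, List.sum_cons]
    rw [Finset.card_union_of_disjoint (disjoint_foldr_union l U h.1), ih h.2]

lemma list_sum_eq_fin_sum (l : List ℕ) : l.sum = ∑ j : Fin l.length, l.get j := by
  induction l with
  | nil => simp
  | cons a l ih =>
    simp only [List.length_cons, List.sum_cons, Fin.sum_univ_succ, ih]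
    rfl

lemma map_sum_fin {β : Type*} (l : List β) (f : β → ℕ) :
    (l.map f).sum = ∑ j : Fin l.length, f (l.get j) := by
  induction l with
  | nil => simp
  | cons a l ih =>
    simp only [List.map_cons, List.sum_cons, List.length_cons, Fin.sum_univ_succ, ih]
    rfl

/-- the set of elements of `U` whose successor is also in `U` -/
noncomputable def fpart (m : ℕ) (U : Finset (Fin m)) : Finset (Fin m) := by
  classical
  exact U.filter (fun i => ∃ hi : i.val + 1 < m, (⟨i.val + 1, hi⟩ : Fin m) ∈ U)

lemma fpart_image (m : ℕ) (U : Finset (Fin m)) :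
    (fpart m U).image Fin.val
      = (U.image Fin.val).filter (fun n => n + 1 ∈ U.image Fin.val) := by
  classical
  ext n
  simp only [fpart, Finset.mem_image, Finset.mem_filter]
  constructor
  · rintro ⟨i, ⟨hiU, hlt, hsucc⟩, rfl⟩
    exact ⟨⟨i, hiU, rfl⟩, ⟨_, hsucc, rfl⟩⟩
  · rintro ⟨⟨i, hiU, rfl⟩, ⟨i', hi'U, hi'⟩⟩
    have hlt : (i : ℕ) + 1 < m := hi' ▸ i'.isLt
    have heq : (⟨(i : ℕ) + 1, hlt⟩ : Fin m) = i' := Fin.ext hi'.symm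
    exact ⟨i, ⟨hiU, hlt, heq ▸ hi'U⟩, rfl⟩

lemma fpart_card_key (m : ℕ) (U : Finset (Fin m)) (hU : U.Nonempty) :
    ((fpart m U).card + 1 ≤ U.card) ∧
    (((fpart m U).card + 1 = U.card) ↔
      ∃ a, U.image Fin.val = Finset.Ico a (a + U.card)) := by
  classical
  have h1 : (U.image Fin.val).card = U.card :=
    Finset.card_image_of_injective _ Fin.val_injective
  have h2 : ((fpart m U).image Fin.val).card = (fpart m U).card :=
    Finset.card_image_of_injective _ Fin.val_injective
  have hne : (U.image Fin.val).Nonempty := hU.image _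
  obtain ⟨hle, hiff⟩ := nat_key (U.image Fin.val) hne
  rw [← fpart_image, h1, h2] at hle hiff
  exact ⟨hle, hiff⟩

open Finset in
theorem stmt14 (m : ℕ) (hm : 1 ≤ m) (L : List (Finset (Fin m)))
    (hL : IsOrderedPartition m L) :
    (sigmaSet m L).card ≤ m - L.length ∧
    ((sigmaSet m L).card = m - L.length ↔
      -- every part `U_j` is an interval of consecutive integers
      ∀ j : Fin L.length, ∃ a : ℕ,
        (L.get j).image Fin.val = Finset.Ico a (a + (L.get j).card)) := by
  classical
  obtain ⟨hparts, hdisj, huniv⟩ := hL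
  -- decompose sigmaSet as a union of the fparts
  have hfsub : ∀ U : Finset (Fin m), fpart m U ⊆ U := by
    intro U
    simp only [fpart]
    exact Finset.filter_subset _ _
  have hsig : sigmaSet m L = (L.map (fpart m)).foldr (· ∪ ·) ∅ := by
    ext i
    rw [mem_foldr_union_s14]
    simp only [sigmaSet, Finset.mem_filter, Finset.mem_univ, true_and, List.mem_map, fpart]
    constructor
    · rintro ⟨hi, j, h1, h2⟩
      exact ⟨_, ⟨L.get j, L.get_mem _, rfl⟩, Finset.mem_filter.2 ⟨h1, hi, h2⟩⟩
    · rintro ⟨_, ⟨U, hU, rfl⟩, hi⟩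
      obtain ⟨h1, hlt, h2⟩ := Finset.mem_filter.1 hi
      obtain ⟨j, hj⟩ := List.mem_iff_get.1 hU
      exact ⟨hlt, j, hj ▸ h1, hj ▸ h2⟩
  have hdisj2 : (L.map (fpart m)).Pairwise Disjoint := by
    refine List.Pairwise.map _ ?_ hdisj
    intro U V hUV
    exact Finset.disjoint_of_subset_left (hfsub U) (Finset.disjoint_of_subset_right (hfsub V) hUV)
  have hm' : m = ∑ j : Fin L.length, (L.get j).card := by
    have h1 := card_foldr_union_s14 L hdisj
    rw [huniv, Finset.card_univ, Fintype.card_fin] at h1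
    exact h1.trans (map_sum_fin L _)
  have hσ : (sigmaSet m L).card = ∑ j : Fin L.length, (fpart m (L.get j)).card := by
    rw [hsig, card_foldr_union_s14 _ hdisj2, List.map_map]
    exact map_sum_fin L _
  have key : ∀ j : Fin L.length,
      ((fpart m (L.get j)).card + 1 ≤ (L.get j).card) ∧
      (((fpart m (L.get j)).card + 1 = (L.get j).card) ↔
        ∃ a, (L.get j).image Fin.val = Finset.Ico a (a + (L.get j).card)) :=
    fun j => fpart_card_key m (L.get j) (hparts _ (L.get_mem _))
  have hsum1 : ∑ j : Fin L.length, ((fpart m (L.get j)).card + 1)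
      = (sigmaSet m L).card + L.length := by
    rw [Finset.sum_add_distrib, ← hσ]
    simp [Finset.card_univ]
  have hle : ∑ j : Fin L.length, ((fpart m (L.get j)).card + 1)
      ≤ ∑ j : Fin L.length, (L.get j).card :=
    Finset.sum_le_sum fun j _ => (key j).1
  have hA : (sigmaSet m L).card + L.length ≤ m := by omega
  refine ⟨by omega, ?_, ?_⟩
  · intro h
    have hEq : ∑ j : Fin L.length, ((fpart m (L.get j)).card + 1)
        = ∑ j : Fin L.length, (L.get j).card := by omega
    have h2 := (Finset.sum_eq_sum_iff_of_le (fun j _ => (key j).1)).1 hEq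
    intro j
    exact (key j).2.1 (h2 j (Finset.mem_univ j))
  · intro h
    have hEq : ∑ j : Fin L.length, ((fpart m (L.get j)).card + 1)
        = ∑ j : Fin L.length, (L.get j).card :=
      Finset.sum_congr rfl fun j _ => (key j).2.2 (h j)
    omega
end
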